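/- arXiv:1804.04006 — 7 statements merged into one kernel-verified Lean document; each statement's English description precedes it below -/
import Mathlib

section
/- Let q ≥ 2 be an integer and let T be a triangle presentation of order q on a finite base set F. Let F₂ = {(a,b) ∈ F × F : a ≠ b}, and for (b,d) ∈ F₂ let (α(b,d), γ(b,d)) ∈ F₂ denote the unique pair for which there exists k ∈ F with (α(b,d), b, k) ∈ T and (γ(b,d), d, k) ∈ T. Then the map F₂ → F₂ : (b,d) ↦ (α(b,d), γ(b,d)) is a bijection. -/
/-- A triangle presentation of order `q` on the finite base set `F`:
(i) cyclic invariance; (ii) for each pair `(i,j)` there is at most one `k` with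
`(i,j,k) ∈ T` (one writes `i → j` when such `k` exists; `i` is then a predecessor of `j`
and `j` a successor of `i`); (iii) any two distinct points have exactly one common
predecessor and exactly one common successor; (iv) every point has exactly `q+1`
predecessors and exactly `q+1` successors. -/
def IsTrianglePresentation {F : Type*} [Fintype F] (q : ℕ) (T : Set (F × F × F)) : Prop :=
  (∀ i j k : F, (i, j, k) ∈ T → (k, i, j) ∈ T) ∧
  (∀ i j k k' : F, (i, j, k) ∈ T → (i, j, k') ∈ T → k = k') ∧
  (∀ a b : F, a ≠ b →
      (∃! p : F, (∃ k, (p, a, k) ∈ T) ∧ ∃ k, (p, b, k) ∈ T) ∧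
      (∃! s : F, (∃ k, (a, s, k) ∈ T) ∧ ∃ k, (b, s, k) ∈ T)) ∧
  (∀ x : F, {p : F | ∃ k, (p, x, k) ∈ T}.ncard = q + 1 ∧
      {s : F | ∃ k, (x, s, k) ∈ T}.ncard = q + 1)

/-- The map `F₂ → F₂ : (b,d) ↦ (α(b,d), γ(b,d))`, where `(α(b,d), γ(b,d))` is the unique
pair for which there exists `k` with `(α(b,d), b, k) ∈ T` and `(γ(b,d), d, k) ∈ T`, is a
bijection of `F₂ = {(a,b) : a ≠ b}` onto itself. -/
theorem bijOn_of_trianglePresentation {F : Type*} [Fintype F] (q : ℕ) (hq : 2 ≤ q)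
    (T : Set (F × F × F)) (hT : IsTrianglePresentation q T)
    (f : F × F → F × F)
    (hf : ∀ b d : F, b ≠ d → ∃ k : F, ((f (b, d)).1, b, k) ∈ T ∧ ((f (b, d)).2, d, k) ∈ T) :
    Set.BijOn f {p : F × F | p.1 ≠ p.2} {p : F × F | p.1 ≠ p.2} := by

  obtain ⟨hcyc, huniq, hpred, _⟩ := hT
  have rot : ∀ i j k : F, (i, j, k) ∈ T → (j, k, i) ∈ T :=
    fun i j k h => hcyc _ _ _ (hcyc _ _ _ h)
  -- the image lies in F₂
  have hmaps : ∀ b d : F, b ≠ d → (f (b, d)).1 ≠ (f (b, d)).2 := by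
    intro b d hbd he
    obtain ⟨k, h1, h2⟩ := hf b d hbd
    rw [he] at h1
    exact hbd (huniq k (f (b, d)).2 b d (hcyc _ _ _ h1) (hcyc _ _ _ h2))
  constructor
  · rintro ⟨b, d⟩ hbd
    exact hmaps b d hbd
  constructor
  · rintro ⟨b, d⟩ hbd ⟨b', d'⟩ hbd' heq
    simp only [Set.mem_setOf_eq] at hbd hbd'
    obtain ⟨k, h1, h2⟩ := hf b d hbd
    obtain ⟨k', h1', h2'⟩ := hf b' d' hbd'
    rw [heq] at h1 h2
    have hαγ : (f (b', d')).1 ≠ (f (b', d')).2 := hmaps b' d' hbd'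
    -- k and k' are both common predecessors of f.1 and f.2
    have hk : k = k' := by
      have hu := (hpred _ _ hαγ).1
      obtain ⟨p, _, hup⟩ := hu
      rw [hup k ⟨⟨b, hcyc _ _ _ h1⟩, ⟨d, hcyc _ _ _ h2⟩⟩,
        hup k' ⟨⟨b', hcyc _ _ _ h1'⟩, ⟨d', hcyc _ _ _ h2'⟩⟩]
    rw [hk] at h1 h2
    have hb : b = b' := huniq _ _ _ _ (hcyc _ _ _ h1) (hcyc _ _ _ h1')
    have hd : d = d' := huniq _ _ _ _ (hcyc _ _ _ h2) (hcyc _ _ _ h2')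
    rw [hb, hd]
  · rintro ⟨α, γ⟩ hαγ
    simp only [Set.mem_setOf_eq] at hαγ
    obtain ⟨p, ⟨⟨b, hb⟩, ⟨d, hd⟩⟩, _⟩ := (hpred α γ hαγ).1
    -- (p, α, b) ∈ T and (p, γ, d) ∈ T
    have hαb : (α, b, p) ∈ T := rot _ _ _ hb
    have hγd : (γ, d, p) ∈ T := rot _ _ _ hd
    have hbd : b ≠ d := by
      intro he
      rw [he] at hαb
      exact hαγ (huniq d p α γ (rot _ _ _ hαb) (rot _ _ _ hγd))
    refine ⟨(b, d), hbd, ?_⟩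
    obtain ⟨k, h1, h2⟩ := hf b d hbd
    -- p and k are both common successors of b and d
    have hk : p = k := by
      obtain ⟨s, _, hus⟩ := (hpred b d hbd).2
      rw [hus p ⟨⟨α, rot _ _ _ hαb⟩, ⟨γ, rot _ _ _ hγd⟩⟩,
        hus k ⟨⟨_, rot _ _ _ h1⟩, ⟨_, rot _ _ _ h2⟩⟩]
    rw [hk] at hαb hγd
    have e1 : (f (b, d)).1 = α := huniq _ _ _ _ (rot _ _ _ h1) (rot _ _ _ hαb)
    have e2 : (f (b, d)).2 = γ := huniq _ _ _ _ (rot _ _ _ h2) (rot _ _ _ hγd)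
    exact Prod.ext e1 e2
end

section
/- Let q ≥ 2 be an integer and T a triangle presentation of order q on a finite base set F. Then, as linear operators on ℂ^F ⊗ ℂ^F, one has (E* ⊗ 1 ⊗ 1)(1 ⊗ 1 ⊗ E) = (1 ⊗ 1 ⊗ E*)(E ⊗ 1 ⊗ 1) = (q+1)·YY*. In particular, P := YY* = (q+1)^{-1}(E* ⊗ 1 ⊗ 1)(1 ⊗ 1 ⊗ E) is the orthogonal projection of ℂ^F ⊗ ℂ^F onto the linear span of the vectors ξ_i = Σ_{(i,j,k)∈T} e_j ⊗ e_k, i ∈ F. -/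
open Matrix

variable {F : Type*} [Fintype F] [DecidableEq F]

/-- The vector `E = Σ_{(a,b,c)∈T} e_a ⊗ e_b ⊗ e_c ∈ (ℂ^F)^{⊗3}`, in the identification of
`(ℂ^F)^{⊗3}` with functions `F³ → ℂ`. -/
noncomputable def Evec (T : Set (F × F × F)) [DecidablePred (· ∈ T)] : F × F × F → ℂ :=
  fun x => if x ∈ T then 1 else 0

/-- The vectors `ξ_i = Σ_{(i,j,k)∈T} e_j ⊗ e_k ∈ ℂ^F ⊗ ℂ^F`. -/
noncomputable def xiVec (T : Set (F × F × F)) [DecidablePred (· ∈ T)] : F → (F × F → ℂ) :=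
  fun i p => if (i, p.1, p.2) ∈ T then 1 else 0

/-- The matrix (in the standard orthonormal bases) of the map `Y : ℂ^F → ℂ^F ⊗ ℂ^F`,
`Y e_i = (q+1)^{-1/2} Σ_{(i,j,k)∈T} e_j ⊗ e_k`. -/
noncomputable def Ymat (q : ℕ) (T : Set (F × F × F)) [DecidablePred (· ∈ T)] :
    Matrix (F × F) F ℂ :=
  Matrix.of fun p i =>
    if (i, p.1, p.2) ∈ T then (((Real.sqrt ((q : ℝ) + 1))⁻¹ : ℝ) : ℂ) else 0

/-- The matrix of `1 ⊗ 1 ⊗ E : ℂ^F ⊗ ℂ^F → (ℂ^F)^{⊗5}`. -/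
noncomputable def oneOneE (T : Set (F × F × F)) [DecidablePred (· ∈ T)] :
    Matrix (F × F × F × F × F) (F × F) ℂ :=
  Matrix.of fun x p =>
    if x.1 = p.1 ∧ x.2.1 = p.2 ∧ (x.2.2.1, x.2.2.2.1, x.2.2.2.2) ∈ T then 1 else 0

/-- The matrix of `E* ⊗ 1 ⊗ 1 : (ℂ^F)^{⊗5} → ℂ^F ⊗ ℂ^F`. -/
noncomputable def estarOneOne (T : Set (F × F × F)) [DecidablePred (· ∈ T)] :
    Matrix (F × F) (F × F × F × F × F) ℂ :=
  Matrix.of fun p x =>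
    if (x.1, x.2.1, x.2.2.1) ∈ T ∧ p.1 = x.2.2.2.1 ∧ p.2 = x.2.2.2.2 then 1 else 0

/-- The matrix of `E ⊗ 1 ⊗ 1 : ℂ^F ⊗ ℂ^F → (ℂ^F)^{⊗5}`. -/
noncomputable def eOneOne (T : Set (F × F × F)) [DecidablePred (· ∈ T)] :
    Matrix (F × F × F × F × F) (F × F) ℂ :=
  Matrix.of fun x p =>
    if (x.1, x.2.1, x.2.2.1) ∈ T ∧ x.2.2.2.1 = p.1 ∧ x.2.2.2.2 = p.2 then 1 else 0

/-- The matrix of `1 ⊗ 1 ⊗ E* : (ℂ^F)^{⊗5} → ℂ^F ⊗ ℂ^F`. -/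
noncomputable def oneOneEstar (T : Set (F × F × F)) [DecidablePred (· ∈ T)] :
    Matrix (F × F) (F × F × F × F × F) ℂ :=
  Matrix.of fun p x =>
    if p.1 = x.1 ∧ p.2 = x.2.1 ∧ (x.2.2.1, x.2.2.2.1, x.2.2.2.2) ∈ T then 1 else 0

/-- The operator `P = (q+1)⁻¹ (E* ⊗ 1 ⊗ 1)(1 ⊗ 1 ⊗ E)` on `ℂ^F ⊗ ℂ^F`. -/
noncomputable def Pmat (q : ℕ) (T : Set (F × F × F)) [DecidablePred (· ∈ T)] :
    Matrix (F × F) (F × F) ℂ :=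
  ((q : ℂ) + 1)⁻¹ • (estarOneOne T * oneOneE T)


private lemma triPres.sum_ite_unique {α : Type*} [Fintype α] (P : α → Prop) [DecidablePred P]
    (h : ∀ a b, P a → P b → a = b) :
    (∑ a : α, if P a then (1 : ℂ) else 0) = if ∃ a, P a then 1 else 0 := by
  by_cases he : ∃ a, P a
  · obtain ⟨a, ha⟩ := he
    rw [if_pos ⟨a, ha⟩, Finset.sum_eq_single a
      (fun b _ hb => if_neg fun hPb => hb (h b a hPb ha))
      (fun ha' => absurd (Finset.mem_univ a) ha'), if_pos ha]
  · push_neg at he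
    simp [he]

set_option maxHeartbeats 1000000 in
/-- `(E*⊗1⊗1)(1⊗1⊗E) = (1⊗1⊗E*)(E⊗1⊗1) = (q+1)·YY*`; in particular
`P = (q+1)⁻¹(E*⊗1⊗1)(1⊗1⊗E)` is the orthogonal projection of `ℂ^F ⊗ ℂ^F` onto the
linear span of the vectors `ξ_i`, `i ∈ F`. -/
theorem estarOneOne_mul_oneOneE (q : ℕ) (hq : 2 ≤ q) (T : Set (F × F × F))
    [DecidablePred (· ∈ T)] (hT : IsTrianglePresentation q T) :
    estarOneOne T * oneOneE T = oneOneEstar T * eOneOne T ∧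
    estarOneOne T * oneOneE T = ((q : ℂ) + 1) • (Ymat q T * (Ymat q T)ᴴ) ∧
    (Pmat q T)ᴴ = Pmat q T ∧
    Pmat q T * Pmat q T = Pmat q T ∧
    LinearMap.range (Matrix.mulVecLin (Pmat q T)) =
      Submodule.span ℂ (Set.range (xiVec T)) := by
  obtain ⟨hcyc, huniq, hcommon, hdeg⟩ := hT
  have cyc3 : ∀ i j k : F, (i, j, k) ∈ T ↔ (j, k, i) ∈ T :=
    fun i j k => ⟨fun h => hcyc _ _ _ (hcyc _ _ _ h), hcyc j k i⟩
  set c : ℝ := (Real.sqrt ((q : ℝ) + 1))⁻¹ with hc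
  have hqpos : (0 : ℝ) < (q : ℝ) + 1 := by positivity
  have hqc : ((q : ℂ) + 1) ≠ 0 := by
    have := Nat.cast_add_one_ne_zero (R := ℂ) q
    exact_mod_cast this
  have hcc : (c : ℂ) * (c : ℂ) = ((q : ℂ) + 1)⁻¹ := by
    have h1 : c * c = ((q : ℝ) + 1)⁻¹ := by
      rw [hc, ← mul_inv, Real.mul_self_sqrt hqpos.le]
    calc (c : ℂ) * (c : ℂ) = ((c * c : ℝ) : ℂ) := by push_cast; ring
      _ = ((((q : ℝ) + 1)⁻¹ : ℝ) : ℂ) := by rw [h1]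
      _ = ((q : ℂ) + 1)⁻¹ := by push_cast; ring
  have hc0 : (c : ℂ) ≠ 0 := by
    have hcpos : (0 : ℝ) < c := by
      rw [hc]
      have := Real.sqrt_pos.mpr hqpos
      positivity
    exact_mod_cast hcpos.ne'
  -- entry of estarOneOne * oneOneE
  have hA : ∀ p p' : F × F, (estarOneOne T * oneOneE T) p p' =
      ∑ cc : F, if (p'.1, p'.2, cc) ∈ T ∧ (cc, p.1, p.2) ∈ T then 1 else 0 := by
    intro p p'
    rw [Matrix.mul_apply]
    have h : ∀ x : F × F × F × F × F, estarOneOne T p x * oneOneE T x p' =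
        if x.2.2.2.2 = p.2 then if x.2.2.2.1 = p.1 then if x.1 = p'.1 then if x.2.1 = p'.2 then
          (if (p'.1, p'.2, x.2.2.1) ∈ T ∧ (x.2.2.1, p.1, p.2) ∈ T then 1 else 0)
          else 0 else 0 else 0 else 0 := by
      rintro ⟨a, b, cc, d, e⟩
      obtain ⟨p1, p2⟩ := p; obtain ⟨p1', p2'⟩ := p'
      simp only [estarOneOne, oneOneE, Matrix.of_apply, ite_mul, mul_ite, one_mul, mul_zero,
        zero_mul, mul_one]
      split_ifs <;> subst_vars <;> tauto
    simp only [h, Fintype.sum_prod_type, Finset.sum_ite_irrel, Finset.sum_const_zero,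
      Finset.sum_ite_eq' Finset.univ, Finset.mem_univ, if_true]
  -- entry of oneOneEstar * eOneOne
  have hB : ∀ p p' : F × F, (oneOneEstar T * eOneOne T) p p' =
      ∑ cc : F, if (p.1, p.2, cc) ∈ T ∧ (cc, p'.1, p'.2) ∈ T then 1 else 0 := by
    intro p p'
    rw [Matrix.mul_apply]
    have h : ∀ x : F × F × F × F × F, oneOneEstar T p x * eOneOne T x p' =
        if x.2.2.2.2 = p'.2 then if x.2.2.2.1 = p'.1 then if x.1 = p.1 then if x.2.1 = p.2 then
          (if (p.1, p.2, x.2.2.1) ∈ T ∧ (x.2.2.1, p'.1, p'.2) ∈ T then 1 else 0)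
          else 0 else 0 else 0 else 0 := by
      rintro ⟨a, b, cc, d, e⟩
      obtain ⟨p1, p2⟩ := p; obtain ⟨p1', p2'⟩ := p'
      simp only [oneOneEstar, eOneOne, Matrix.of_apply, ite_mul, mul_ite, one_mul, mul_zero,
        zero_mul, mul_one]
      split_ifs <;> subst_vars <;> tauto
    simp only [h, Fintype.sum_prod_type, Finset.sum_ite_irrel, Finset.sum_const_zero,
      Finset.sum_ite_eq' Finset.univ, Finset.mem_univ, if_true]
  -- entry of (q+1) • Y Yᴴ
  have hY : ∀ p p' : F × F, (((q : ℂ) + 1) • (Ymat q T * (Ymat q T)ᴴ)) p p' =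
      ∑ i : F, if (i, p.1, p.2) ∈ T ∧ (i, p'.1, p'.2) ∈ T then 1 else 0 := by
    rintro ⟨p1, p2⟩ ⟨p1', p2'⟩
    rw [Matrix.smul_apply, Matrix.mul_apply, smul_eq_mul, Finset.mul_sum]
    refine Finset.sum_congr rfl fun i _ => ?_
    simp only [Ymat, Matrix.conjTranspose_apply, Matrix.of_apply]
    by_cases h1 : (i, p1, p2) ∈ T
    · by_cases h2 : (i, p1', p2') ∈ T
      · rw [if_pos h1, if_pos h2, if_pos ⟨h1, h2⟩, Complex.star_def, Complex.conj_ofReal,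
          ← hc, hcc, mul_inv_cancel₀ hqc]
      · rw [if_pos h1, if_neg h2]
        simp [h2]
    · rw [if_neg h1]
      simp [h1]
  -- counting: each i has exactly q+1 outgoing triangles
  have hcount : ∀ i : F, (∑ j : F, ∑ k : F, if (i, j, k) ∈ T then (1 : ℂ) else 0)
      = (q : ℂ) + 1 := by
    intro i
    have h1 : ∀ j : F, (∑ k : F, if (i, j, k) ∈ T then (1 : ℂ) else 0)
        = if ∃ k, (i, j, k) ∈ T then 1 else 0 :=
      fun j => triPres.sum_ite_unique _ (fun k k' hk hk' => huniq i j k k' hk hk')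
    simp only [h1]
    rw [Finset.sum_boole]
    have hd := (hdeg i).2
    have hset : {s : F | ∃ k, (i, s, k) ∈ T}
        = ↑(Finset.univ.filter fun s => ∃ k, (i, s, k) ∈ T) := by
      ext s; simp
    rw [hset, Set.ncard_coe_finset] at hd
    rw [hd]
    push_cast
    ring
  have hYtY : (Ymat q T)ᴴ * Ymat q T = 1 := by
    ext i i'
    rw [Matrix.mul_apply]
    by_cases hii : i = i'
    · subst hii
      rw [Matrix.one_apply_eq]
      have hterm : ∀ p : F × F, (Ymat q T)ᴴ i p * Ymat q T p i
          = ((q : ℂ) + 1)⁻¹ * (if (i, p.1, p.2) ∈ T then 1 else 0) := by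
        intro p
        simp only [Ymat, Matrix.conjTranspose_apply, Matrix.of_apply]
        by_cases h : (i, p.1, p.2) ∈ T
        · rw [if_pos h, if_pos h, Complex.star_def, Complex.conj_ofReal, ← hc, hcc, mul_one]
        · simp [h]
      rw [Finset.sum_congr rfl fun p _ => hterm p, ← Finset.mul_sum, Fintype.sum_prod_type,
        hcount i, inv_mul_cancel₀ hqc]
    · rw [Matrix.one_apply_ne hii]
      apply Finset.sum_eq_zero
      intro p _
      simp only [Ymat, Matrix.conjTranspose_apply, Matrix.of_apply]
      by_cases h1 : (i, p.1, p.2) ∈ T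
      · by_cases h2 : (i', p.1, p.2) ∈ T
        · exact absurd (huniq p.1 p.2 i i' ((cyc3 i p.1 p.2).mp h1)
            ((cyc3 i' p.1 p.2).mp h2)) hii
        · rw [if_neg h2, mul_zero]
      · rw [if_neg h1]
        simp
  have hE1 : estarOneOne T * oneOneE T = ((q : ℂ) + 1) • (Ymat q T * (Ymat q T)ᴴ) := by
    ext p p'
    rw [hA p p', hY p p']
    refine Finset.sum_congr rfl fun i _ => ?_
    refine if_congr ?_ rfl rfl
    constructor
    · rintro ⟨h1, h2⟩; exact ⟨h2, (cyc3 i p'.1 p'.2).mpr h1⟩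
    · rintro ⟨h1, h2⟩; exact ⟨(cyc3 i p'.1 p'.2).mp h2, h1⟩
  have hP : Pmat q T = Ymat q T * (Ymat q T)ᴴ := by
    rw [Pmat, hE1, smul_smul, inv_mul_cancel₀ hqc, one_smul]
  have hPY : Pmat q T * Ymat q T = Ymat q T := by
    rw [hP, Matrix.mul_assoc, hYtY, Matrix.mul_one]
  refine ⟨?_, hE1, ?_, ?_, ?_⟩
  · ext p p'
    rw [hA p p', hB p p']
    refine Finset.sum_congr rfl fun cc _ => ?_
    refine if_congr ?_ rfl rfl
    constructor
    · rintro ⟨h1, h2⟩; exact ⟨(cyc3 cc p.1 p.2).mp h2, (cyc3 cc p'.1 p'.2).mpr h1⟩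
    · rintro ⟨h1, h2⟩; exact ⟨(cyc3 cc p'.1 p'.2).mp h2, (cyc3 cc p.1 p.2).mpr h1⟩
  · rw [hP, Matrix.conjTranspose_mul, Matrix.conjTranspose_conjTranspose]
  · rw [hP, Matrix.mul_assoc, ← Matrix.mul_assoc (Ymat q T)ᴴ (Ymat q T) (Ymat q T)ᴴ,
      hYtY, Matrix.one_mul]
  · have hrange : LinearMap.range ((Pmat q T).mulVecLin)
        = LinearMap.range ((Ymat q T).mulVecLin) := by
      apply le_antisymm
      · rw [hP, Matrix.mulVecLin_mul]
        exact LinearMap.range_comp_le_range _ _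
      · conv_lhs => rw [← hPY]
        rw [Matrix.mulVecLin_mul]
        exact LinearMap.range_comp_le_range _ _
    rw [hrange, Matrix.range_mulVecLin]
    have hcol : ∀ i : F, (Ymat q T)ᵀ i = (c : ℂ) • xiVec T i := by
      intro i
      funext p
      simp only [Ymat, xiVec, Matrix.transpose_apply, Matrix.of_apply, Pi.smul_apply,
        smul_eq_mul, mul_ite, mul_one, mul_zero, hc]
    apply le_antisymm
    · rw [Submodule.span_le]
      rintro _ ⟨i, rfl⟩
      rw [show (Ymat q T).col i = (Ymat q T)ᵀ i from rfl, hcol i]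
      exact Submodule.smul_mem _ _ (Submodule.subset_span ⟨i, rfl⟩)
    · rw [Submodule.span_le]
      rintro _ ⟨i, rfl⟩
      have hxi : xiVec T i = (c : ℂ)⁻¹ • (Ymat q T)ᵀ i := by
        rw [hcol i, smul_smul, inv_mul_cancel₀ hc0, one_smul]
      rw [hxi]
      exact Submodule.smul_mem _ _ (Submodule.subset_span ⟨i, rfl⟩)
end

section
/- Let q ≥ 2 be an integer and T a triangle presentation of order q on a finite base set F. Let P = YY* on ℂ^F ⊗ ℂ^F, and let Q be the orthogonal projection of (ℂ^F)^{⊗3} onto the linear span of the vectors e_i ⊗ ξ_i (i ∈ F), i.e. Q = (q+1)^{-1} Σ_{i∈F} |e_i ⊗ ξ_i⟩⟨e_i ⊗ ξ_i|. Then, as operators on (ℂ^F)^{⊗3}: (1 ⊗ P)(P ⊗ 1)(1 ⊗ P) = (q+1)^{-3} [ (q+1)(1 ⊗ P) + (q² − 1)Q + EE* ]. -/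
set_option maxHeartbeats 1000000
set_option linter.unusedSectionVars false
set_option linter.unusedVariables false


open Matrix

variable {F : Type*} [Fintype F] [DecidableEq F]

/-- The matrix of `1 ⊗ P : (ℂ^F)^{⊗3} → (ℂ^F)^{⊗3}`, where `P = YY*`. -/
noncomputable def onePmat (q : ℕ) (T : Set (F × F × F)) [DecidablePred (· ∈ T)] :
    Matrix (F × F × F) (F × F × F) ℂ :=
  Matrix.of fun x y => if x.1 = y.1 then (Ymat q T * (Ymat q T)ᴴ) x.2 y.2 else 0

/-- The matrix of `P ⊗ 1 : (ℂ^F)^{⊗3} → (ℂ^F)^{⊗3}`, where `P = YY*`. -/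
noncomputable def pOneMat (q : ℕ) (T : Set (F × F × F)) [DecidablePred (· ∈ T)] :
    Matrix (F × F × F) (F × F × F) ℂ :=
  Matrix.of fun x y =>
    if x.2.2 = y.2.2 then (Ymat q T * (Ymat q T)ᴴ) (x.1, x.2.1) (y.1, y.2.1) else 0

/-- The vectors `e_i ⊗ ξ_i ∈ (ℂ^F)^{⊗3}`. -/
noncomputable def etaVec (T : Set (F × F × F)) [DecidablePred (· ∈ T)] :
    F → (F × F × F → ℂ) :=
  fun i x => if x.1 = i ∧ (i, x.2.1, x.2.2) ∈ T then 1 else 0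

/-- The orthogonal projection `Q = (q+1)⁻¹ Σ_{i∈F} |e_i ⊗ ξ_i⟩⟨e_i ⊗ ξ_i|` of `(ℂ^F)^{⊗3}`
onto the span of the vectors `e_i ⊗ ξ_i`. -/
noncomputable def Qmat (q : ℕ) (T : Set (F × F × F)) [DecidablePred (· ∈ T)] :
    Matrix (F × F × F) (F × F × F) ℂ :=
  ((q : ℂ) + 1)⁻¹ • ∑ i : F, Matrix.vecMulVec (etaVec T i) (star (etaVec T i))
lemma sum_boole_unique {α : Type*} [Fintype α] (P : α → Prop) [DecidablePred P]
    (h : ∀ x y, P x → P y → x = y) :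
    ∑ x, (if P x then (1:ℂ) else 0) = if ∃ x, P x then 1 else 0 := by
  by_cases he : ∃ x, P x
  · obtain ⟨x0, hx0⟩ := he
    rw [if_pos ⟨x0, hx0⟩, Finset.sum_eq_single x0]
    · simp [hx0]
    · intro y _ hy
      simp only [ite_eq_right_iff]
      intro hPy; exact absurd (h y x0 hPy hx0) hy
    · simp
  · rw [if_neg he]
    apply Finset.sum_eq_zero
    intro x _
    simp only [ite_eq_right_iff]
    intro hPx; exact absurd ⟨x, hPx⟩ he

lemma boole_and (A B : Prop) [Decidable A] [Decidable B] :
    (if A ∧ B then (1:ℂ) else 0) = (if A then 1 else 0) * (if B then 1 else 0) := by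
  by_cases hA : A <;> by_cases hB : B <;> simp [hA, hB]

section TP
variable (q : ℕ) (T : Set (F × F × F)) [DecidablePred (· ∈ T)]

lemma tp_cyc (hT : IsTrianglePresentation q T) {i j k : F} (h : (i,j,k) ∈ T) :
    (j,k,i) ∈ T := hT.1 _ _ _ (hT.1 _ _ _ h)

lemma tp_uk (hT : IsTrianglePresentation q T) {i j k k' : F} (h : (i,j,k) ∈ T)
    (h' : (i,j,k') ∈ T) : k = k' := hT.2.1 _ _ _ _ h h'

lemma tp_ui (hT : IsTrianglePresentation q T) {i i' j k : F} (h : (i,j,k) ∈ T)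
    (h' : (i',j,k) ∈ T) : i = i' :=
  hT.2.1 _ _ _ _ (tp_cyc q T hT h) (tp_cyc q T hT h')

lemma tp_uj (hT : IsTrianglePresentation q T) {i j j' k : F} (h : (i,j,k) ∈ T)
    (h' : (i,j',k) ∈ T) : j = j' :=
  hT.2.1 _ _ _ _ (tp_cyc q T hT (tp_cyc q T hT h)) (tp_cyc q T hT (tp_cyc q T hT h'))

lemma YY_apply (hT : IsTrianglePresentation q T) (p p' : F × F) :
    (Ymat q T * (Ymat q T)ᴴ) p p' =
      ((q:ℂ)+1)⁻¹ * (if ∃ i, (i,p.1,p.2) ∈ T ∧ (i,p'.1,p'.2) ∈ T then 1 else 0) := by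
  have hc : (((Real.sqrt ((q:ℝ)+1))⁻¹ : ℝ) : ℂ) * (((Real.sqrt ((q:ℝ)+1))⁻¹ : ℝ) : ℂ)
      = ((q:ℂ)+1)⁻¹ := by
    rw [← Complex.ofReal_mul, ← mul_inv, Real.mul_self_sqrt (by positivity)]
    push_cast
    ring
  rw [Matrix.mul_apply]
  have hterm : ∀ i : F, Ymat q T p i * (Ymat q T)ᴴ i p'
      = ((q:ℂ)+1)⁻¹ * (if (i,p.1,p.2) ∈ T ∧ (i,p'.1,p'.2) ∈ T then 1 else 0) := by
    intro i
    simp only [Ymat, Matrix.conjTranspose_apply, Matrix.of_apply]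
    by_cases h1 : (i,p.1,p.2) ∈ T <;> by_cases h2 : (i,p'.1,p'.2) ∈ T <;>
      simp [h1, h2, ← hc, Complex.conj_ofReal]
  simp only [hterm]
  rw [← Finset.mul_sum, sum_boole_unique]
  intro x y hx hy
  exact tp_ui q T hT hx.1 hy.1

lemma onePmat_apply (hT : IsTrianglePresentation q T) (x y : F × F × F) :
    onePmat q T x y = ((q:ℂ)+1)⁻¹ *
      (if x.1 = y.1 ∧ ∃ i, (i,x.2.1,x.2.2) ∈ T ∧ (i,y.2.1,y.2.2) ∈ T then 1 else 0) := by
  simp only [onePmat, Matrix.of_apply, YY_apply q T hT]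
  by_cases h : x.1 = y.1 <;> simp [h]

lemma pOneMat_apply (hT : IsTrianglePresentation q T) (x y : F × F × F) :
    pOneMat q T x y = ((q:ℂ)+1)⁻¹ *
      (if x.2.2 = y.2.2 ∧ ∃ m, (m,x.1,x.2.1) ∈ T ∧ (m,y.1,y.2.1) ∈ T then 1 else 0) := by
  simp only [pOneMat, Matrix.of_apply, YY_apply q T hT]
  by_cases h : x.2.2 = y.2.2 <;> simp [h]


lemma lhs_apply (hT : IsTrianglePresentation q T) (x w : F × F × F) :
    (onePmat q T * pOneMat q T * onePmat q T) x w =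
      (((q:ℂ)+1)^3)⁻¹ * ∑ t : F × F × F,
        (if (∃ i, (i,x.2.1,x.2.2) ∈ T ∧ (i,t.1,t.2.1) ∈ T) ∧
            (∃ m, (m,x.1,t.1) ∈ T ∧ (m,w.1,t.2.2) ∈ T) ∧
            (∃ n, (n,t.2.2,t.2.1) ∈ T ∧ (n,w.2.1,w.2.2) ∈ T) then (1:ℂ) else 0) := by
  have hterm : ∀ s u : F × F × F,
      onePmat q T x u * pOneMat q T u s * onePmat q T s w =
      (((q:ℂ)+1)^3)⁻¹ *
        (if (x.1 = u.1 ∧ ∃ i, (i,x.2.1,x.2.2) ∈ T ∧ (i,u.2.1,u.2.2) ∈ T) ∧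
            (u.2.2 = s.2.2 ∧ ∃ m, (m,u.1,u.2.1) ∈ T ∧ (m,s.1,s.2.1) ∈ T) ∧
            (s.1 = w.1 ∧ ∃ n, (n,s.2.1,s.2.2) ∈ T ∧ (n,w.2.1,w.2.2) ∈ T) then 1 else 0) := by
    intro s u
    rw [onePmat_apply q T hT, pOneMat_apply q T hT, onePmat_apply q T hT]
    by_cases h1 : (x.1 = u.1 ∧ ∃ i, (i,x.2.1,x.2.2) ∈ T ∧ (i,u.2.1,u.2.2) ∈ T)
    · by_cases h2 : (u.2.2 = s.2.2 ∧ ∃ m, (m,u.1,u.2.1) ∈ T ∧ (m,s.1,s.2.1) ∈ T)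
      · by_cases h3 : (s.1 = w.1 ∧ ∃ n, (n,s.2.1,s.2.2) ∈ T ∧ (n,w.2.1,w.2.2) ∈ T)
        · rw [if_pos h1, if_pos h2, if_pos h3, if_pos ⟨h1, h2, h3⟩]
          simp only [mul_one]
          rw [← inv_pow]; ring
        · rw [if_neg h3,
            if_neg (not_and_of_not_right _ (not_and_of_not_right _ h3))]; ring
      · rw [if_neg h2, if_neg (not_and_of_not_right _ (not_and_of_not_left _ h2))]; ring
    · rw [if_neg h1, if_neg (not_and_of_not_left _ h1)]; ring
  have step1 : (onePmat q T * pOneMat q T * onePmat q T) x w =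
      (((q:ℂ)+1)^3)⁻¹ * ∑ s : F × F × F, ∑ u : F × F × F,
        (if (x.1 = u.1 ∧ ∃ i, (i,x.2.1,x.2.2) ∈ T ∧ (i,u.2.1,u.2.2) ∈ T) ∧
            (u.2.2 = s.2.2 ∧ ∃ m, (m,u.1,u.2.1) ∈ T ∧ (m,s.1,s.2.1) ∈ T) ∧
            (s.1 = w.1 ∧ ∃ n, (n,s.2.1,s.2.2) ∈ T ∧ (n,w.2.1,w.2.2) ∈ T) then (1:ℂ) else 0) := by
    rw [Matrix.mul_apply, Finset.mul_sum]
    refine Finset.sum_congr rfl fun s _ => ?_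
    rw [Matrix.mul_apply, Finset.sum_mul, Finset.mul_sum]
    exact Finset.sum_congr rfl fun u _ => hterm s u
  rw [step1]
  congr 1
  -- convert both indicator sums to cards and exhibit a bijection
  rw [← Fintype.sum_prod_type']
  simp only [Finset.sum_boole]
  congr 1
  refine Finset.card_bij' (fun p _ => (p.2.2.1, p.2.2.2, p.1.2.1))
    (fun t _ => ((w.1, t.2.2, t.2.1), (x.1, t.1, t.2.1))) ?_ ?_ ?_ ?_
  · rintro ⟨s, u⟩ hp
    simp only [Finset.mem_filter, Finset.mem_univ, true_and] at hp ⊢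
    obtain ⟨⟨h1, hi⟩, ⟨h2, hm⟩, ⟨h3, hn⟩⟩ := hp
    refine ⟨hi, ?_, ?_⟩
    · rw [h1]; rwa [h3] at hm
    · rwa [← h2] at hn
  · rintro ⟨y, z, v⟩ ht
    simp only [Finset.mem_filter, Finset.mem_univ, true_and] at ht ⊢
    exact ⟨ht.1, ht.2.1, ht.2.2⟩
  · rintro ⟨⟨s1, s2, s3⟩, ⟨u1, u2, u3⟩⟩ hp
    simp only [Finset.mem_filter, Finset.mem_univ, true_and] at hp
    obtain ⟨⟨h1, -⟩, ⟨h2, -⟩, ⟨h3, -⟩⟩ := hp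
    dsimp only at h1 h2 h3 ⊢
    subst h1; subst h2; subst h3
    rfl
  · rintro ⟨y, z, v⟩ _
    rfl

lemma key (hT : IsTrianglePresentation q T) (a b c a' b' c' : F) :
    (∑ t : F × F × F,
      (if (∃ i, (i,b,c) ∈ T ∧ (i,t.1,t.2.1) ∈ T) ∧
          (∃ m, (m,a,t.1) ∈ T ∧ (m,a',t.2.2) ∈ T) ∧
          (∃ n, (n,t.2.2,t.2.1) ∈ T ∧ (n,b',c') ∈ T) then (1:ℂ) else 0))
    = (if a = a' ∧ ∃ j, (j,b,c) ∈ T ∧ (j,b',c') ∈ T then 1 else 0)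
      + ((q:ℂ) - 1) * (if a = a' ∧ (a,b,c) ∈ T ∧ (a,b',c') ∈ T then 1 else 0)
      + (if (a,b,c) ∈ T ∧ (a',b',c') ∈ T then 1 else 0) := by
  by_cases hi : ∃ i, (i,b,c) ∈ T
  swap
  · rw [Finset.sum_eq_zero (fun t _ => by
      rw [if_neg]; rintro ⟨⟨i, hi1, -⟩, -⟩; exact hi ⟨i, hi1⟩)]
    rw [if_neg (by rintro ⟨-, j, hj1, -⟩; exact hi ⟨j, hj1⟩),
        if_neg (by rintro ⟨-, h, -⟩; exact hi ⟨a, h⟩),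
        if_neg (by rintro ⟨h, -⟩; exact hi ⟨a, h⟩)]
    ring
  by_cases hn : ∃ n, (n,b',c') ∈ T
  swap
  · rw [Finset.sum_eq_zero (fun t _ => by
      rw [if_neg]; rintro ⟨-, -, ⟨n, -, hn2⟩⟩; exact hn ⟨n, hn2⟩)]
    rw [if_neg (by rintro ⟨-, j, -, hj2⟩; exact hn ⟨j, hj2⟩),
        if_neg (by rintro ⟨-, -, h⟩; exact hn ⟨a, h⟩),
        if_neg (by rintro ⟨-, h⟩; exact hn ⟨a', h⟩)]
    ring
  obtain ⟨i₀, hi₀⟩ := hi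
  obtain ⟨n₀, hn₀⟩ := hn
  have habc : ∀ {j : F}, (j,b,c) ∈ T ↔ j = i₀ :=
    fun {j} => ⟨fun h => tp_ui q T hT h hi₀, fun h => h ▸ hi₀⟩
  have hnbc : ∀ {j : F}, (j,b',c') ∈ T ↔ j = n₀ :=
    fun {j} => ⟨fun h => tp_ui q T hT h hn₀, fun h => h ▸ hn₀⟩
  by_cases haa : a = a'
  · subst haa
    by_cases hin : i₀ = n₀
    · subst hin
      by_cases hai : a = i₀
      · -- the (q+1) case
        subst hai
        have hC : ∀ t : F × F × F,
            ((∃ i, (i,b,c) ∈ T ∧ (i,t.1,t.2.1) ∈ T) ∧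
             (∃ m, (m,a,t.1) ∈ T ∧ (m,a,t.2.2) ∈ T) ∧
             (∃ n, (n,t.2.2,t.2.1) ∈ T ∧ (n,b',c') ∈ T))
            ↔ ((a,t.1,t.2.1) ∈ T ∧ t.2.2 = t.1) := by
          intro t
          constructor
          · rintro ⟨⟨i, hi1, hi2⟩, ⟨m, hm1, hm2⟩, -⟩
            have := habc.mp hi1; subst this
            exact ⟨hi2, (tp_uk q T hT hm1 hm2).symm⟩
          · rintro ⟨h, he⟩
            refine ⟨⟨a, hi₀, h⟩, ⟨t.2.1, tp_cyc q T hT (tp_cyc q T hT h), ?_⟩,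
              ⟨a, ?_, hn₀⟩⟩
            · rw [he]; exact tp_cyc q T hT (tp_cyc q T hT h)
            · rw [he]; exact h
        have hsum : (∑ t : F × F × F,
            (if (∃ i, (i,b,c) ∈ T ∧ (i,t.1,t.2.1) ∈ T) ∧
                (∃ m, (m,a,t.1) ∈ T ∧ (m,a,t.2.2) ∈ T) ∧
                (∃ n, (n,t.2.2,t.2.1) ∈ T ∧ (n,b',c') ∈ T) then (1:ℂ) else 0))
            = (q:ℂ) + 1 := by
          rw [Finset.sum_congr rfl (fun t _ => if_congr (hC t) rfl rfl)]
          rw [Fintype.sum_prod_type]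
          have h2 : ∀ y : F, (∑ p : F × F,
              (if (a, y, p.1) ∈ T ∧ p.2 = y then (1:ℂ) else 0))
              = if ∃ z, (a,y,z) ∈ T then 1 else 0 := by
            intro y
            rw [Fintype.sum_prod_type]
            have h3 : ∀ z : F, (∑ v : F, (if (a,y,z) ∈ T ∧ v = y then (1:ℂ) else 0))
                = if (a,y,z) ∈ T then 1 else 0 := by
              intro z
              by_cases h : (a,y,z) ∈ T <;> simp [h]
            rw [Finset.sum_congr rfl (fun z _ => h3 z)]
            exact sum_boole_unique _ (fun z z' h h' => tp_uk q T hT h h')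
          rw [Finset.sum_congr rfl (fun y _ => h2 y), Finset.sum_boole]
          have hd := ((hT.2.2.2) a).2
          rw [Set.ncard_eq_toFinset_card', Set.toFinset_setOf] at hd
          rw [hd]
          push_cast
          ring
        rw [hsum, if_pos ⟨rfl, a, hi₀, hn₀⟩, if_pos ⟨rfl, hi₀, hn₀⟩, if_pos ⟨hi₀, hn₀⟩]
        ring
      · -- one common successor of a and i₀
        rw [sum_boole_unique _ (fun t t' ht ht' => ?_), if_pos ?_,
          if_pos ⟨rfl, i₀, hi₀, hn₀⟩,
          if_neg (by rintro ⟨-, h, -⟩; exact hai (habc.mp h)),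
          if_neg (by rintro ⟨h, -⟩; exact hai (habc.mp h))]
        · ring
        · -- existence
          obtain ⟨s, ⟨⟨k1, hk1⟩, ⟨k2, hk2⟩⟩, -⟩ := ((hT.2.2.1) a i₀ hai).2
          refine ⟨(s, k2, s), ⟨i₀, hi₀, hk2⟩,
            ⟨k1, tp_cyc q T hT (tp_cyc q T hT hk1), tp_cyc q T hT (tp_cyc q T hT hk1)⟩,
            ⟨i₀, hk2, hn₀⟩⟩
        · -- uniqueness
          obtain ⟨⟨i, hia, hib⟩, ⟨m, hm1, hm2⟩, -⟩ := ht
          obtain ⟨⟨i', hia', hib'⟩, ⟨m', hm1', hm2'⟩, -⟩ := ht'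
          have hib0 : (i₀, t.1, t.2.1) ∈ T := (habc.mp hia) ▸ hib
          have hib0' : (i₀, t'.1, t'.2.1) ∈ T := (habc.mp hia') ▸ hib'
          have he : t.2.2 = t.1 := (tp_uk q T hT hm1 hm2).symm
          have he' : t'.2.2 = t'.1 := (tp_uk q T hT hm1' hm2').symm
          have h1 : t.1 = t'.1 := by
            obtain ⟨ss, -, hun⟩ := ((hT.2.2.1) a i₀ hai).2
            rw [hun t.1 ⟨⟨m, tp_cyc q T hT hm1⟩, ⟨t.2.1, hib0⟩⟩,
              hun t'.1 ⟨⟨m', tp_cyc q T hT hm1'⟩, ⟨t'.2.1, hib0'⟩⟩]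
          have h2 : t.2.1 = t'.2.1 := by
            rw [h1] at hib0
            exact tp_uk q T hT hib0 hib0'
          have h3 : t.2.2 = t'.2.2 := by rw [he, he', h1]
          exact Prod.ext h1 (Prod.ext h2 h3)
    · -- i₀ ≠ n₀, a = a' : everything vanishes
      rw [Finset.sum_eq_zero (fun t _ => by
        rw [if_neg]
        rintro ⟨⟨i, hi1, hi2⟩, ⟨m, hm1, hm2⟩, ⟨n, hn1, hn2⟩⟩
        have := habc.mp hi1; subst this
        have := hnbc.mp hn2; subst this
        have he : t.2.2 = t.1 := (tp_uk q T hT hm1 hm2).symm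
        rw [he] at hn1
        exact hin (tp_ui q T hT hi2 hn1))]
      rw [if_neg (by rintro ⟨-, j, hj1, hj2⟩; exact hin ((habc.mp hj1) ▸ (hnbc.mp hj2))),
          if_neg (by rintro ⟨-, h1, h2⟩; exact hin ((habc.mp h1) ▸ (hnbc.mp h2))),
          if_neg (by rintro ⟨h1, h2⟩; exact hin ((habc.mp h1) ▸ (hnbc.mp h2)))]
      ring
  · -- a ≠ a'
    by_cases hD : a = i₀ ∧ a' = n₀
    · obtain ⟨hD1, hD2⟩ := hD
      rw [← hD1] at hi₀ habc
      rw [← hD2] at hn₀ hnbc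
      rw [sum_boole_unique _ (fun t t' ht ht' => ?_), if_pos ?_,
        if_neg (by rintro ⟨h, -⟩; exact haa h),
        if_neg (by rintro ⟨h, -⟩; exact haa h),
        if_pos ⟨hi₀, hn₀⟩]
      · ring
      · -- existence: common predecessor of a and a'
        obtain ⟨p, ⟨⟨k1, hk1⟩, ⟨k2, hk2⟩⟩, -⟩ := ((hT.2.2.1) a a' haa).1
        exact ⟨(k1, p, k2), ⟨a, hi₀, tp_cyc q T hT hk1⟩, ⟨p, hk1, hk2⟩,
          ⟨a', tp_cyc q T hT hk2, hn₀⟩⟩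
      · -- uniqueness
        obtain ⟨⟨i, hia, hib⟩, ⟨m, hm1, hm2⟩, ⟨n, hn1, hn2⟩⟩ := ht
        obtain ⟨⟨i', hia', hib'⟩, ⟨m', hm1', hm2'⟩, ⟨n', hn1', hn2'⟩⟩ := ht'
        have hib0 : (a, t.1, t.2.1) ∈ T := (habc.mp hia) ▸ hib
        have hib0' : (a, t'.1, t'.2.1) ∈ T := (habc.mp hia') ▸ hib'
        obtain ⟨p, -, hun⟩ := ((hT.2.2.1) a a' haa).1
        have hmp : m = p := hun m ⟨⟨t.1, hm1⟩, ⟨t.2.2, hm2⟩⟩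
        have hmp' : m' = p := hun m' ⟨⟨t'.1, hm1'⟩, ⟨t'.2.2, hm2'⟩⟩
        rw [hmp] at hm1 hm2
        rw [hmp'] at hm1' hm2'
        have h1 : t.1 = t'.1 := tp_uk q T hT hm1 hm1'
        have h3 : t.2.2 = t'.2.2 := tp_uk q T hT hm2 hm2'
        have h2 : t.2.1 = t'.2.1 := by
          rw [h1] at hib0
          exact tp_uk q T hT hib0 hib0'
        exact Prod.ext h1 (Prod.ext h2 h3)
    · -- a ≠ a' and ¬(a = i₀ ∧ a' = n₀) : everything vanishes
      rw [Finset.sum_eq_zero (fun t _ => by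
        rw [if_neg]
        rintro ⟨⟨i, hi1, hi2⟩, ⟨m, hm1, hm2⟩, ⟨n, hn1, hn2⟩⟩
        have hi20 : (i₀, t.1, t.2.1) ∈ T := (habc.mp hi1) ▸ hi2
        have hn10 : (n₀, t.2.2, t.2.1) ∈ T := (hnbc.mp hn2) ▸ hn1
        by_cases hyv : t.1 = t.2.2
        · rw [← hyv] at hm2
          exact haa (tp_uj q T hT hm1 hm2)
        · -- t.2.1 and m are both common successors of t.1 and t.2.2
          obtain ⟨ss, -, hun⟩ := ((hT.2.2.1) t.1 t.2.2 hyv).2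
          have hz : t.2.1 = ss := hun t.2.1
            ⟨⟨i₀, tp_cyc q T hT hi20⟩, ⟨n₀, tp_cyc q T hT hn10⟩⟩
          have hm : m = ss := hun m
            ⟨⟨a, tp_cyc q T hT (tp_cyc q T hT hm1)⟩, ⟨a', tp_cyc q T hT (tp_cyc q T hT hm2)⟩⟩
          have hzm : t.2.1 = m := by rw [hz, hm]
          rw [← hzm] at hm1 hm2
          have ha1 : a = i₀ := tp_ui q T hT (tp_cyc q T hT hm1) hi20
          have ha2 : a' = n₀ := tp_ui q T hT (tp_cyc q T hT hm2) hn10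
          exact hD ⟨ha1, ha2⟩)]
      rw [if_neg (by rintro ⟨h, -⟩; exact haa h),
          if_neg (by rintro ⟨h, -⟩; exact haa h),
          if_neg (by rintro ⟨h1, h2⟩; exact hD ⟨habc.mp h1, hnbc.mp h2⟩)]
      ring

lemma Qmat_apply (x w : F × F × F) :
    Qmat q T x w = ((q:ℂ)+1)⁻¹ *
      (if x.1 = w.1 ∧ (x.1,x.2.1,x.2.2) ∈ T ∧ (x.1,w.2.1,w.2.2) ∈ T then 1 else 0) := by
  simp only [Qmat, Matrix.smul_apply, Matrix.sum_apply, Matrix.vecMulVec_apply,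
    Pi.star_apply, etaVec, smul_eq_mul]
  congr 1
  have hterm : ∀ i : F,
      (if x.1 = i ∧ (i,x.2.1,x.2.2) ∈ T then (1:ℂ) else 0) *
        star (if w.1 = i ∧ (i,w.2.1,w.2.2) ∈ T then (1:ℂ) else 0)
      = if (x.1 = i ∧ (i,x.2.1,x.2.2) ∈ T) ∧ (w.1 = i ∧ (i,w.2.1,w.2.2) ∈ T)
          then 1 else 0 := by
    intro i
    by_cases h1 : x.1 = i ∧ (i,x.2.1,x.2.2) ∈ T <;>
      by_cases h2 : w.1 = i ∧ (i,w.2.1,w.2.2) ∈ T <;> simp [h1, h2]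
  rw [Finset.sum_congr rfl (fun i _ => hterm i),
    sum_boole_unique _ (fun i i' h h' => h.1.1.symm.trans h'.1.1)]
  refine if_congr ⟨?_, ?_⟩ rfl rfl
  · rintro ⟨i, ⟨hx1, hx2⟩, ⟨hw1, hw2⟩⟩
    exact ⟨hx1.trans hw1.symm, hx1 ▸ hx2, hx1 ▸ hw2⟩
  · rintro ⟨h1, h2, h3⟩
    exact ⟨x.1, ⟨rfl, h2⟩, ⟨h1.symm, h3⟩⟩

lemma EE_apply (x w : F × F × F) :
    Matrix.vecMulVec (Evec T) (star (Evec T)) x w =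
      if (x.1,x.2.1,x.2.2) ∈ T ∧ (w.1,w.2.1,w.2.2) ∈ T then 1 else 0 := by
  simp only [Matrix.vecMulVec_apply, Pi.star_apply, Evec]
  by_cases h1 : x ∈ T <;> by_cases h2 : w ∈ T <;>
    simp [h1, h2, show ((x.1,x.2.1,x.2.2) : F × F × F) = x from rfl,
      show ((w.1,w.2.1,w.2.2) : F × F × F) = w from rfl]

end TP

/-- `(1 ⊗ P)(P ⊗ 1)(1 ⊗ P) = (q+1)⁻³ [ (q+1)(1 ⊗ P) + (q² − 1)Q + EE* ]` as operators on
`(ℂ^F)^{⊗3}`, where `P = YY*`. -/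
theorem oneP_pOne_oneP (q : ℕ) (hq : 2 ≤ q) (T : Set (F × F × F)) [DecidablePred (· ∈ T)]
    (hT : IsTrianglePresentation q T) :
    onePmat q T * pOneMat q T * onePmat q T =
      (((q : ℂ) + 1) ^ 3)⁻¹ •
        (((q : ℂ) + 1) • onePmat q T + ((q : ℂ) ^ 2 - 1) • Qmat q T +
          Matrix.vecMulVec (Evec T) (star (Evec T))) := by
  have hq1 : ((q:ℂ) + 1) ≠ 0 := by
    have : ((q:ℂ) + 1) = ((q + 1 : ℕ) : ℂ) := by push_cast; ring
    rw [this]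
    exact_mod_cast Nat.succ_ne_zero q
  ext x w
  rw [lhs_apply q T hT x w, key q T hT x.1 x.2.1 x.2.2 w.1 w.2.1 w.2.2]
  simp only [Matrix.smul_apply, Matrix.add_apply, smul_eq_mul]
  rw [onePmat_apply q T hT x w, Qmat_apply q T x w, EE_apply (T := T) x w]
  have halg : ∀ A B C : ℂ, (((q:ℂ)+1)^3)⁻¹ * (A + ((q:ℂ)-1)*B + C)
      = (((q:ℂ)+1)^3)⁻¹ * (((q:ℂ)+1)*(((q:ℂ)+1)⁻¹*A)
        + ((q:ℂ)^2-1)*(((q:ℂ)+1)⁻¹*B) + C) := by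
    intro A B C
    have h1 : ((q:ℂ)+1)*(((q:ℂ)+1)⁻¹*A) = A := by
      rw [← mul_assoc, mul_inv_cancel₀ hq1, one_mul]
    have h2 : ((q:ℂ)^2-1)*(((q:ℂ)+1)⁻¹*B) = ((q:ℂ)-1)*B := by
      rw [← mul_assoc]
      congr 1
      field_simp
      ring
    rw [h1, h2]
  exact halg _ _ _
end

section
/- Let q ≥ 2 be an integer and T a triangle presentation of order q on a finite base set F. Let R be the orthogonal projection of ℂ^F ⊗ ℂ^F onto the span of the basis vectors e_i ⊗ e_j with i → j in T, and let Q be the orthogonal projection of (ℂ^F)^{⊗3} onto the span of the vectors e_i ⊗ ξ_i (i ∈ F). Then R = (E* ⊗ 1 ⊗ 1)(1 ⊗ Q ⊗ 1)(1 ⊗ 1 ⊗ E) as operators on ℂ^F ⊗ ℂ^F. -/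
open Matrix

variable {F : Type*} [Fintype F] [DecidableEq F]

/-- The matrix of `1 ⊗ Q ⊗ 1 : (ℂ^F)^{⊗5} → (ℂ^F)^{⊗5}` (with `Q` acting on the middle
three tensor legs). -/
noncomputable def oneQoneMat (q : ℕ) (T : Set (F × F × F)) [DecidablePred (· ∈ T)] :
    Matrix (F × F × F × F × F) (F × F × F × F × F) ℂ :=
  Matrix.of fun x y =>
    if x.1 = y.1 ∧ x.2.2.2.2 = y.2.2.2.2 then
      Qmat q T (x.2.1, x.2.2.1, x.2.2.2.1) (y.2.1, y.2.2.1, y.2.2.2.1)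
    else 0

/-- The orthogonal projection `R` of `ℂ^F ⊗ ℂ^F` onto the span of the basis vectors
`e_i ⊗ e_j` with `i → j` in `T`. -/
noncomputable def Rmat (T : Set (F × F × F)) [DecidablePred (· ∈ T)] :
    Matrix (F × F) (F × F) ℂ :=
  Matrix.of fun p p' => if p = p' ∧ ∃ k : F, (p.1, p.2, k) ∈ T then 1 else 0

lemma Qmat_apply_s10 (q : ℕ) (T : Set (F × F × F)) [DecidablePred (· ∈ T)] (a b : F × F × F) :
    Qmat q T a b = ((q : ℂ) + 1)⁻¹ *
      (if a.1 = b.1 ∧ (a.1, a.2.1, a.2.2) ∈ T ∧ (b.1, b.2.1, b.2.2) ∈ T then 1 else 0) := by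
  obtain ⟨a1, a2, a3⟩ := a
  obtain ⟨b1, b2, b3⟩ := b
  simp only [Qmat, Matrix.smul_apply, Matrix.sum_apply, Matrix.vecMulVec_apply, etaVec,
    Pi.star_apply, apply_ite (star : ℂ → ℂ), star_one, star_zero, smul_eq_mul, ite_and]
  congr 1
  rw [Finset.sum_eq_single a1]
  · by_cases h1 : a1 = b1
    · subst h1; simp [ite_and]; split_ifs <;> rfl
    · simp [h1, Ne.symm h1]
  · intro i _ hi; simp [Ne.symm hi]
  · simp

lemma count1 {q : ℕ} {T : Set (F × F × F)} [DecidablePred (· ∈ T)]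
    (hT : IsTrianglePresentation q T) (p1 p1' p2' : F) :
    (∑ c : F, if (p1', p2', c) ∈ T ∧ (p2', c, p1) ∈ T then (1 : ℂ) else 0)
      = if p1 = p1' ∧ ∃ k, (p1', p2', k) ∈ T then 1 else 0 := by
  obtain ⟨hcyc, huniq, -, -⟩ := hT
  by_cases h : p1 = p1' ∧ ∃ k, (p1', p2', k) ∈ T
  · obtain ⟨h1, k, hk⟩ := h
    rw [if_pos ⟨h1, k, hk⟩, Finset.sum_eq_single k]
    · have h2 : (p2', k, p1') ∈ T := hcyc _ _ _ (hcyc _ _ _ hk)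
      rw [if_pos ⟨hk, h1 ▸ h2⟩]
    · intro c _ hc
      rw [if_neg]
      rintro ⟨hc1, -⟩
      exact hc (huniq _ _ _ _ hc1 hk)
    · simp
  · rw [if_neg h, Finset.sum_eq_zero]
    intro c _
    rw [if_neg]
    rintro ⟨hc1, hc2⟩
    have h2 : (p2', c, p1') ∈ T := hcyc _ _ _ (hcyc _ _ _ hc1)
    exact h ⟨huniq _ _ _ _ hc2 h2, c, hc1⟩

lemma count2 {q : ℕ} {T : Set (F × F × F)} [DecidablePred (· ∈ T)]
    (hT : IsTrianglePresentation q T) (p2 p2' : F) :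
    (∑ a : F, ∑ b : F, if (a, b, p2) ∈ T ∧ (p2', a, b) ∈ T then (1 : ℂ) else 0)
      = if p2 = p2' then ((q : ℂ) + 1) else 0 := by
  obtain ⟨hcyc, huniq, -, hcard⟩ := hT
  by_cases h : p2 = p2'
  · subst h
    rw [if_pos rfl]
    have hstep : ∀ a : F, (∑ b : F, if (a, b, p2) ∈ T ∧ (p2, a, b) ∈ T then (1 : ℂ) else 0)
        = if ∃ k, (p2, a, k) ∈ T then 1 else 0 := by
      intro a
      by_cases hex : ∃ k, (p2, a, k) ∈ T
      · obtain ⟨k, hk⟩ := hex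
        rw [if_pos ⟨k, hk⟩, Finset.sum_eq_single k]
        · exact if_pos ⟨hcyc _ _ _ (hcyc _ _ _ hk), hk⟩
        · intro b _ hb
          rw [if_neg]
          rintro ⟨-, hb2⟩
          exact hb (huniq _ _ _ _ hb2 hk)
        · simp
      · rw [if_neg hex, Finset.sum_eq_zero]
        intro b _
        rw [if_neg]
        rintro ⟨-, hb2⟩
        exact hex ⟨b, hb2⟩
    rw [Finset.sum_congr rfl fun a _ => hstep a]
    classical
    rw [Finset.sum_boole]
    have := (hcard p2).2
    have hset : {s : F | ∃ k, (p2, s, k) ∈ T}.ncard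
        = (Finset.univ.filter fun a : F => ∃ k, (p2, a, k) ∈ T).card := by
      rw [Set.ncard_eq_toFinset_card']
      congr 1
      ext a
      simp
    rw [hset] at this
    rw [this]
    push_cast
    ring
  · rw [if_neg h]
    refine Finset.sum_eq_zero fun a _ => Finset.sum_eq_zero fun b _ => ?_
    rw [if_neg]
    rintro ⟨h1, h2⟩
    exact h (huniq _ _ _ _ h1 (hcyc _ _ _ (hcyc _ _ _ h2)))

lemma bigsum_eq {q : ℕ} {T : Set (F × F × F)} [DecidablePred (· ∈ T)]
    (hT : IsTrianglePresentation q T) (p1 p2 p1' p2' : F) :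
    (∑ x : F, ∑ y : F, ∑ z : F,
      if (x, y, z) ∈ T then
        ∑ u : F, ∑ v : F,
          if (p2', u, v) ∈ T then
            if (p2', x, y) ∈ T then
              if (p1', p2', u) ∈ T then
                if p1 = v then if p2 = z then ((q : ℂ) + 1)⁻¹ else 0 else 0
              else 0
            else 0
          else 0
      else 0)
    = if (p1 = p1' ∧ p2 = p2') ∧ ∃ k : F, (p1, p2, k) ∈ T then 1 else 0 := by
  classical
  set S1c : ℂ := (∑ c : F, if (p1', p2', c) ∈ T ∧ (p2', c, p1) ∈ T then (1 : ℂ) else 0)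
      * ((q : ℂ) + 1)⁻¹ with hS1c
  have stepA : ∀ x y z : F,
      (if (x, y, z) ∈ T then
        ∑ u : F, ∑ v : F,
          if (p2', u, v) ∈ T then
            if (p2', x, y) ∈ T then
              if (p1', p2', u) ∈ T then
                if p1 = v then if p2 = z then ((q : ℂ) + 1)⁻¹ else 0 else 0
              else 0
            else 0
          else 0
      else 0)
      = (if p2 = z ∧ (x, y, z) ∈ T ∧ (p2', x, y) ∈ T then (1 : ℂ) else 0) * S1c := by
    intro x y z
    by_cases hx : (x, y, z) ∈ T
    · by_cases hp : (p2', x, y) ∈ T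
      · by_cases h2 : p2 = z
        · rw [if_pos hx, if_pos (show p2 = z ∧ (x, y, z) ∈ T ∧ (p2', x, y) ∈ T from
            ⟨h2, hx, hp⟩), one_mul, hS1c, Finset.sum_mul]
          refine Finset.sum_congr rfl fun u _ => ?_
          rw [Finset.sum_eq_single p1]
          · rw [ite_mul, one_mul, zero_mul]
            split_ifs <;> simp_all
          · intro v _ hv
            simp [hp, Ne.symm hv, h2]
          · simp
        · simp [hx, hp, h2]
      · simp [hx, hp]
    · simp [hx]
  rw [Finset.sum_congr rfl fun x _ => Finset.sum_congr rfl fun y _ =>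
    Finset.sum_congr rfl fun z _ => stepA x y z]
  simp only [← Finset.sum_mul]
  simp only [ite_and, Finset.sum_ite_irrel, Finset.sum_const_zero, Finset.sum_ite_eq,
    Finset.mem_univ, if_true]
  have hc2 := count2 hT p2 p2'
  have hc1 := count1 hT p1 p1' p2'
  simp only [← ite_and]
  rw [show (∑ x : F, ∑ y : F, if (x, y, p2) ∈ T ∧ (p2', x, y) ∈ T then (1 : ℂ) else 0)
      = if p2 = p2' then ((q : ℂ) + 1) else 0 from hc2, hS1c, hc1]
  have hne : ((q : ℂ) + 1) ≠ 0 := Nat.cast_add_one_ne_zero q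
  by_cases h1 : p1 = p1'
  · by_cases h2 : p2 = p2'
    · subst h1; subst h2
      by_cases hex : ∃ k : F, (p1, p2, k) ∈ T
      · simp [hex]
        field_simp
      · simp [hex]
    · simp [h1, h2]
  · by_cases h2 : p2 = p2' <;> simp [h1, h2]

/-- `R = (E* ⊗ 1 ⊗ 1)(1 ⊗ Q ⊗ 1)(1 ⊗ 1 ⊗ E)` as operators on `ℂ^F ⊗ ℂ^F`. -/
theorem Rmat_eq (q : ℕ) (hq : 2 ≤ q) (T : Set (F × F × F)) [DecidablePred (· ∈ T)]
    (hT : IsTrianglePresentation q T) :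
    Rmat T = estarOneOne T * oneQoneMat q T * oneOneE T := by
  ext ⟨p1, p2⟩ ⟨p1', p2'⟩
  simp only [Matrix.mul_apply, estarOneOne, oneQoneMat, oneOneE, Matrix.of_apply, Qmat_apply_s10,
    Fintype.sum_prod_type, ite_and, mul_ite, ite_mul, mul_zero, zero_mul, mul_one, one_mul,
    Finset.sum_ite_eq, Finset.sum_ite_eq', Finset.mem_univ, if_true,
    Finset.sum_ite_irrel, Finset.sum_const_zero]
  rw [bigsum_eq hT p1 p2 p1' p2']
  simp [Rmat, Prod.ext_iff]
end

section
/- Let q ≥ 2 be an integer and T a triangle presentation of order q on a finite base set F. Let Y : ℂ^F → ℂ^F ⊗ ℂ^F be the isometry Y e_i = (q+1)^{-1/2} Σ_{(i,j,k)∈T} e_j ⊗ e_k. Then the operator (Y* ⊗ 1)(1 ⊗ Y) on ℂ^F ⊗ ℂ^F is invertible. -/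
open Matrix

variable {F : Type*} [Fintype F] [DecidableEq F]

/-- The matrix of `1 ⊗ Y : ℂ^F ⊗ ℂ^F → (ℂ^F)^{⊗3}`. -/
noncomputable def oneYmat (q : ℕ) (T : Set (F × F × F)) [DecidablePred (· ∈ T)] :
    Matrix (F × F × F) (F × F) ℂ :=
  Matrix.of fun x p => if x.1 = p.1 then Ymat q T x.2 p.2 else 0

/-- The matrix of `Y* ⊗ 1 : (ℂ^F)^{⊗3} → ℂ^F ⊗ ℂ^F`. -/
noncomputable def ystarOneMat (q : ℕ) (T : Set (F × F × F)) [DecidablePred (· ∈ T)] :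
    Matrix (F × F) (F × F × F) ℂ :=
  Matrix.of fun p x => if p.2 = x.2.2 then (Ymat q T)ᴴ p.1 (x.1, x.2.1) else 0

namespace TPaux

noncomputable def sC (q : ℕ) : ℂ := (((Real.sqrt ((q : ℝ) + 1))⁻¹ : ℝ) : ℂ)

lemma sC_ne_zero (q : ℕ) : sC q ≠ 0 := by
  have h : (0:ℝ) < Real.sqrt ((q:ℝ) + 1) := Real.sqrt_pos.mpr (by positivity)
  simp only [sC, ne_eq, Complex.ofReal_eq_zero, inv_eq_zero]
  exact ne_of_gt h

lemma star_sC (q : ℕ) : star (sC q) = sC q := by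
  simp [sC, Complex.star_def, Complex.conj_ofReal]

lemma sum_ind_unique {α : Type*} [Fintype α] (P : α → Prop) [DecidablePred P]
    (h : ∀ x y, P x → P y → x = y) (c : ℂ) :
    (∑ x, if P x then c else 0) = if ∃ x, P x then c else 0 := by
  by_cases he : ∃ x, P x
  · obtain ⟨x₀, hx₀⟩ := he
    rw [if_pos ⟨x₀, hx₀⟩, Finset.sum_eq_single x₀]
    · rw [if_pos hx₀]
    · intro b _ hb
      exact if_neg (fun hPb => hb (h b x₀ hPb hx₀))
    · intro hx; exact absurd (Finset.mem_univ x₀) hx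
  · rw [if_neg he]
    exact Finset.sum_eq_zero fun x _ => if_neg (fun hx => he ⟨x, hx⟩)

variable (q : ℕ) (T : Set (F × F × F)) [DecidablePred (· ∈ T)]

lemma Cent (huniq : ∀ i j k k' : F, (i, j, k) ∈ T → (i, j, k') ∈ T → k = k')
    (a b c d : F) :
    (ystarOneMat q T * oneYmat q T) (a, b) (c, d)
      = if ∃ x, (a, c, x) ∈ T ∧ (d, x, b) ∈ T then (sC q) ^ 2 else 0 := by
  rw [Matrix.mul_apply]
  have key : ∀ k : F × F × F,
      ystarOneMat q T (a, b) k * oneYmat q T k (c, d)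
        = if k.1 = c ∧ k.2.2 = b ∧ (a, c, k.2.1) ∈ T ∧ (d, k.2.1, b) ∈ T
          then (sC q) ^ 2 else 0 := by
    rintro ⟨x₁, x₂, x₃⟩
    simp only [ystarOneMat, oneYmat, Ymat, Matrix.of_apply, Matrix.conjTranspose_apply, sC]
    split_ifs <;>
      simp_all [Complex.star_def, Complex.conj_ofReal, sq]
  rw [Finset.sum_congr rfl fun k _ => key k]
  have hiff : (∃ k : F × F × F, k.1 = c ∧ k.2.2 = b ∧ (a, c, k.2.1) ∈ T ∧ (d, k.2.1, b) ∈ T)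
      ↔ (∃ x, (a, c, x) ∈ T ∧ (d, x, b) ∈ T) := by
    constructor
    · rintro ⟨⟨k₁, k₂, k₃⟩, rfl, rfl, h₁, h₂⟩; exact ⟨k₂, h₁, h₂⟩
    · rintro ⟨x, h₁, h₂⟩; exact ⟨(c, x, b), rfl, rfl, h₁, h₂⟩
  rw [sum_ind_unique _ ?_ _, if_congr hiff rfl rfl]
  rintro ⟨k₁, k₂, k₃⟩ ⟨l₁, l₂, l₃⟩ ⟨e₁, e₂, h₁, h₂⟩ ⟨e₃, e₄, h₃, h₄⟩
  simp only at e₁ e₂ e₃ e₄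
  simp only [Prod.mk.injEq]
  exact ⟨e₁.trans e₃.symm, huniq a c k₂ l₂ h₁ h₃, e₂.trans e₄.symm⟩


lemma entries (hT : IsTrianglePresentation q T) (c d c' d' : F) :
    ((ystarOneMat q T * oneYmat q T)ᴴ * (ystarOneMat q T * oneYmat q T)) (c, d) (c', d')
      = if c = d ∧ c' = d' then (if c = c' then (sC q) ^ 4 * ((q : ℂ) + 1) else (sC q) ^ 4)
        else if c = c' ∧ d = d' then (sC q) ^ 4 else 0 := by
  obtain ⟨hcyc, huniq, hcpcs, hcard⟩ := hT
  have hcyc2 : ∀ i j k : F, (i, j, k) ∈ T → (j, k, i) ∈ T :=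
    fun i j k h => hcyc _ _ _ (hcyc _ _ _ h)
  rw [Matrix.mul_apply]
  simp only [Matrix.conjTranspose_apply]
  have key : ∀ r : F × F,
      star ((ystarOneMat q T * oneYmat q T) r (c, d))
        * (ystarOneMat q T * oneYmat q T) r (c', d')
      = if (∃ x, (r.1, c, x) ∈ T ∧ (d, x, r.2) ∈ T)
            ∧ (∃ x, (r.1, c', x) ∈ T ∧ (d', x, r.2) ∈ T)
        then (sC q) ^ 4 else 0 := by
    rintro ⟨a, b⟩
    rw [Cent q T huniq, Cent q T huniq]
    have hst : star ((sC q) ^ 2) = (sC q) ^ 2 := by rw [star_pow, star_sC]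
    by_cases h1 : (∃ x, (a, c, x) ∈ T ∧ (d, x, b) ∈ T) <;>
      by_cases h2 : (∃ x, (a, c', x) ∈ T ∧ (d', x, b) ∈ T)
    · rw [if_pos h1, if_pos h2, if_pos ⟨h1, h2⟩, hst]; ring
    · rw [if_pos h1, if_neg h2, if_neg (fun h => h2 h.2), mul_zero]
    · rw [if_neg h1, if_pos h2, if_neg (fun h => h1 h.1), star_zero, zero_mul]
    · rw [if_neg h1, if_neg h2, if_neg (fun h => h1 h.1), star_zero, zero_mul]
  rw [Finset.sum_congr rfl fun r _ => key r]
  by_cases hcd : c = d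
  · subst hcd
    by_cases hcd' : c' = d'
    · subst hcd'
      rw [if_pos ⟨rfl, rfl⟩]
      -- witnesses are pairs (a,a) with a a common predecessor of c and c'
      have hQ : ∀ r : F × F,
          ((∃ x, (r.1, c, x) ∈ T ∧ (c, x, r.2) ∈ T)
            ∧ (∃ x, (r.1, c', x) ∈ T ∧ (c', x, r.2) ∈ T))
          ↔ (r.2 = r.1 ∧ (∃ k, (r.1, c, k) ∈ T) ∧ (∃ k, (r.1, c', k) ∈ T)) := by
        rintro ⟨a, b⟩
        dsimp only
        constructor
        · rintro ⟨⟨x, h1, h2⟩, ⟨x', h3, h4⟩⟩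
          exact ⟨(huniq c x a b (hcyc2 _ _ _ h1) h2).symm, ⟨x, h1⟩, ⟨x', h3⟩⟩
        · rintro ⟨rfl, ⟨k1, hk1⟩, ⟨k2, hk2⟩⟩
          exact ⟨⟨k1, hk1, hcyc2 _ _ _ hk1⟩, ⟨k2, hk2, hcyc2 _ _ _ hk2⟩⟩
      rw [Finset.sum_congr rfl fun r _ => by rw [if_congr (hQ r) rfl rfl]]
      by_cases hcc' : c = c'
      · subst hcc'
        rw [if_pos rfl, Fintype.sum_prod_type]
        have inner : ∀ a : F,
            (∑ b : F, if b = a ∧ (∃ k, (a, c, k) ∈ T) ∧ (∃ k, (a, c, k) ∈ T)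
              then (sC q) ^ 4 else 0)
            = if (∃ k, (a, c, k) ∈ T) then (sC q) ^ 4 else 0 := by
          intro a
          by_cases hP : ∃ k, (a, c, k) ∈ T
          · simp only [hP, and_true, and_self, if_true]
            rw [Finset.sum_ite_eq' Finset.univ a (fun _ => (sC q) ^ 4),
              if_pos (Finset.mem_univ a)]
          · simp [hP]
        rw [Finset.sum_congr rfl fun a _ => inner a, Finset.sum_ite, Finset.sum_const,
          Finset.sum_const, smul_zero, add_zero]
        have hc : (Finset.univ.filter (fun a : F => ∃ k, (a, c, k) ∈ T)).card = q + 1 := by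
          have h := (hcard c).1
          rwa [Set.ncard_eq_toFinset_card', Set.toFinset_setOf] at h
        rw [hc, nsmul_eq_mul]
        push_cast
        ring
      · rw [if_neg hcc']
        have hu := (hcpcs c c' hcc').1
        obtain ⟨p, ⟨hp1, hp2⟩, hpu⟩ := hu
        rw [sum_ind_unique _ ?_ _, if_pos ⟨(p, p), rfl, hp1, hp2⟩]
        rintro ⟨a, b⟩ ⟨a2, b2⟩ ⟨e1, ha⟩ ⟨e2, ha2⟩
        simp only at e1 e2 ha ha2
        have haa : a = a2 := (hpu a ha).trans (hpu a2 ha2).symm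
        simp only [Prod.mk.injEq]
        exact ⟨haa, by rw [e1, e2, haa]⟩
    · -- c = d, c' ≠ d' : all entries vanish
      rw [if_neg (fun h => hcd' h.2), if_neg (fun h : c = c' ∧ c = d' => hcd' (h.1.symm.trans h.2))]
      refine Finset.sum_eq_zero fun r _ => if_neg ?_
      rintro ⟨⟨x, h1, h2⟩, ⟨x', h3, h4⟩⟩
      have hba : r.2 = r.1 := (huniq c x r.1 r.2 (hcyc2 _ _ _ h1) h2).symm
      rw [hba] at h4
      exact hcd' (huniq x' r.1 c' d' (hcyc _ _ _ h3) (hcyc2 _ _ _ h4))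
  · -- c ≠ d
    rw [if_neg (fun h => hcd h.1)]
    -- general fact: any witness forces c' = c and d' = d
    have hforce : ∀ a b : F,
        ((∃ x, (a, c, x) ∈ T ∧ (d, x, b) ∈ T) ∧ (∃ x, (a, c', x) ∈ T ∧ (d', x, b) ∈ T))
        → c = c' ∧ d = d' := by
      rintro a b ⟨⟨x, h1, h2⟩, ⟨x', h3, h4⟩⟩
      have hxa : (x, a, c) ∈ T := hcyc _ _ _ h1
      have hxb : (x, b, d) ∈ T := hcyc2 _ _ _ h2
      have hxa' : (x', a, c') ∈ T := hcyc _ _ _ h3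
      have hxb' : (x', b, d') ∈ T := hcyc2 _ _ _ h4
      have hab : a ≠ b := by
        rintro rfl
        exact hcd (huniq x a c d hxa hxb)
      obtain ⟨p, _, hpu⟩ := (hcpcs a b hab).1
      have hx : x = x' :=
        (hpu x ⟨⟨c, hxa⟩, ⟨d, hxb⟩⟩).trans (hpu x' ⟨⟨c', hxa'⟩, ⟨d', hxb'⟩⟩).symm
      subst hx
      exact ⟨huniq x a c c' hxa hxa', huniq x b d d' hxb hxb'⟩
    by_cases he : c = c' ∧ d = d'
    · obtain ⟨rfl, rfl⟩ := he
      rw [if_pos ⟨rfl, rfl⟩]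
      obtain ⟨x, ⟨⟨k1, hk1⟩, ⟨k2, hk2⟩⟩, hxu⟩ := (hcpcs c d hcd).2
      rw [sum_ind_unique _ ?_ _, if_pos ⟨(k1, k2), ⟨x, hcyc _ _ _ hk1, hk2⟩, ⟨x, hcyc _ _ _ hk1, hk2⟩⟩]
      rintro ⟨a, b⟩ ⟨a2, b2⟩ ⟨⟨y, h1, h2⟩, -⟩ ⟨⟨y2, h3, h4⟩, -⟩
      have hy : y = x := hxu y ⟨⟨a, hcyc2 _ _ _ h1⟩, ⟨b, h2⟩⟩
      have hy2 : y2 = x := hxu y2 ⟨⟨a2, hcyc2 _ _ _ h3⟩, ⟨b2, h4⟩⟩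
      rw [hy] at h1 h2
      rw [hy2] at h3 h4
      simp only [Prod.mk.injEq]
      exact ⟨huniq c x a a2 (hcyc2 _ _ _ h1) (hcyc2 _ _ _ h3),
        huniq d x b b2 (hcyc _ _ _ (hcyc2 _ _ _ h2)) (hcyc _ _ _ (hcyc2 _ _ _ h4))⟩
    · rw [if_neg he]
      exact Finset.sum_eq_zero fun r _ => if_neg (fun h => he (hforce r.1 r.2 h))

end TPaux

/-- The operator `(Y* ⊗ 1)(1 ⊗ Y)` on `ℂ^F ⊗ ℂ^F` is invertible. -/
theorem ystarOne_oneY_invertible (q : ℕ) (hq : 2 ≤ q) (T : Set (F × F × F))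
    [DecidablePred (· ∈ T)] (hT : IsTrianglePresentation q T) :
    IsUnit (ystarOneMat q T * oneYmat q T) := by
  classical
  rw [Matrix.isUnit_iff_isUnit_det, isUnit_iff_ne_zero]
  intro hdet
  obtain ⟨v, hv0, hv⟩ := Matrix.exists_mulVec_eq_zero_iff.mpr hdet
  set C := ystarOneMat q T * oneYmat q T with hCdef
  have hCC : (Cᴴ * C).mulVec v = 0 := by
    rw [← Matrix.mulVec_mulVec, hv, Matrix.mulVec_zero]
  have s4 : (TPaux.sC q) ^ 4 ≠ 0 := pow_ne_zero _ (TPaux.sC_ne_zero q)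
  have hoff : ∀ c d : F, c ≠ d → v (c, d) = 0 := by
    intro c d hcd
    have h0 : ∑ p' : F × F, (Cᴴ * C) (c, d) p' * v p' = 0 := by
      have := congrFun hCC (c, d)
      simpa [Matrix.mulVec, dotProduct] using this
    rw [Finset.sum_eq_single ((c, d) : F × F)] at h0
    · rw [TPaux.entries q T hT, if_neg (fun h => hcd h.1), if_pos ⟨rfl, rfl⟩] at h0
      exact (mul_eq_zero.mp h0).resolve_left s4
    · rintro ⟨c', d'⟩ - hne
      rw [TPaux.entries q T hT, if_neg (fun h => hcd h.1),
        if_neg (fun h : c = c' ∧ d = d' => hne (by rw [← h.1, ← h.2])), zero_mul]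
    · intro h; exact absurd (Finset.mem_univ _) h
  have hdiag : ∀ c : F, (TPaux.sC q) ^ 4 *
      ((q : ℂ) * v (c, c) + ∑ c' : F, v (c', c')) = 0 := by
    intro c
    have h0 : ∑ p' : F × F, (Cᴴ * C) (c, c) p' * v p' = 0 := by
      have := congrFun hCC (c, c)
      simpa [Matrix.mulVec, dotProduct] using this
    have hterm : ∀ p' : F × F,
        (Cᴴ * C) (c, c) p' * v p'
          = (if p'.2 = p'.1 then (TPaux.sC q) ^ 4 * v p' else 0)
            + (if p' = (c, c) then (TPaux.sC q) ^ 4 * (q : ℂ) * v p' else 0) := by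
      rintro ⟨c', d'⟩
      rw [TPaux.entries q T hT]
      by_cases h1 : c' = d'
      · subst h1
        by_cases h2 : c = c'
        · subst h2
          rw [if_pos ⟨rfl, rfl⟩, if_pos rfl, if_pos rfl, if_pos rfl]
          ring
        · rw [if_pos ⟨rfl, rfl⟩, if_neg h2, if_pos rfl,
            if_neg (fun h : ((c', c') : F × F) = (c, c) => h2 ((congrArg Prod.fst h).symm)),
            add_zero]
      · rw [if_neg (fun h => h1 h.2),
          if_neg (fun h : c = c' ∧ c = d' => h1 (h.1.symm.trans h.2)), zero_mul,
          if_neg (fun h : d' = c' => h1 h.symm),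
          if_neg (fun h : ((c', d') : F × F) = (c, c) =>
            h1 ((congrArg Prod.fst h).trans (congrArg Prod.snd h).symm)),
          add_zero]
    rw [Finset.sum_congr rfl fun p' _ => hterm p', Finset.sum_add_distrib,
      Finset.sum_ite_eq' Finset.univ ((c, c) : F × F)
        (fun p' => (TPaux.sC q) ^ 4 * (q : ℂ) * v p'), if_pos (Finset.mem_univ _)] at h0
    have hs1 : ∑ p' : F × F, (if p'.2 = p'.1 then (TPaux.sC q) ^ 4 * v p' else 0)
        = (TPaux.sC q) ^ 4 * ∑ c' : F, v (c', c') := by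
      rw [Fintype.sum_prod_type, Finset.mul_sum]
      refine Finset.sum_congr rfl fun a _ => ?_
      rw [Finset.sum_ite_eq' Finset.univ a (fun b => (TPaux.sC q) ^ 4 * v (a, b)),
        if_pos (Finset.mem_univ _)]
    rw [hs1] at h0
    linear_combination h0
  have hdiag' : ∀ c : F, (q : ℂ) * v (c, c) + ∑ c' : F, v (c', c') = 0 :=
    fun c => (mul_eq_zero.mp (hdiag c)).resolve_left s4
  have hq0 : (q : ℂ) ≠ 0 := Nat.cast_ne_zero.mpr (by omega)
  have hsum : ((q : ℂ) + (Fintype.card F : ℂ)) * (∑ c' : F, v (c', c')) = 0 := by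
    have h2 : ∑ c : F, ((q : ℂ) * v (c, c) + ∑ c' : F, v (c', c')) = 0 :=
      Finset.sum_eq_zero fun c _ => hdiag' c
    rw [Finset.sum_add_distrib, ← Finset.mul_sum, Finset.sum_const,
      Finset.card_univ, nsmul_eq_mul] at h2
    linear_combination h2
  have hqn : ((q : ℂ) + (Fintype.card F : ℂ)) ≠ 0 := by
    have h3 : ((q + Fintype.card F : ℕ) : ℂ) ≠ 0 := Nat.cast_ne_zero.mpr (by omega)
    simpa [Nat.cast_add] using h3
  have hS0 : (∑ c' : F, v (c', c')) = 0 := (mul_eq_zero.mp hsum).resolve_left hqn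
  have hdiag0 : ∀ c : F, v (c, c) = 0 := by
    intro c
    have h4 := hdiag' c
    rw [hS0, add_zero] at h4
    exact (mul_eq_zero.mp h4).resolve_left hq0
  apply hv0
  funext p
  obtain ⟨a, b⟩ := p
  show v (a, b) = 0
  by_cases hab : a = b
  · subst hab; exact hdiag0 a
  · exact hoff a b hab
end

section
/- Let q ≥ 2 be an integer and let T₁ and T₂ be triangle presentations of order q on the same finite base set F. Let ω : T₂ → ℂ be a function with |ω(i,j,k)| = 1 for all (i,j,k) ∈ T₂. Define E_{T₁} = Σ_{(i,j,k)∈T₁} e_i ⊗ e_j ⊗ e_k and E_{T₂,ω} = Σ_{(i,j,k)∈T₂} ω(i,j,k) e_i ⊗ e_j ⊗ e_k in (ℂ^F)^{⊗3}. If w is a unitary operator on ℂ^F such that (w ⊗ w ⊗ w)E_{T₁} = E_{T₂,ω}, then w is a monomial matrix (in every row and every column of w there is exactly one nonzero entry), and consequently there exists a bijection θ : F → F with (θ × θ × θ)(T₁) = T₂, i.e. T₁ and T₂ are isomorphic triangle presentations. -/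
open Matrix

set_option linter.unusedSectionVars false
set_option linter.unusedVariables false

namespace TPAux

variable {F : Type*} [Fintype F] [DecidableEq F]



variable {F : Type*} [Fintype F] [DecidableEq F]

lemma ind_mul_ind (p r : Prop) [Decidable p] [Decidable r] :
    (if p then (1:ℂ) else 0) * (if r then (1:ℂ) else 0) = if p ∧ r then 1 else 0 := by
  by_cases hp : p <;> by_cases hr : r <;> simp [hp, hr]

lemma sum_ind_unique (p : F → Prop) [DecidablePred p]
    (h : ∀ a b, p a → p b → a = b) :
    ∑ k, (if p k then (1:ℂ) else 0) = if ∃ k, p k then 1 else 0 := by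
  by_cases hex : ∃ k, p k
  · obtain ⟨k₀, hk₀⟩ := hex
    rw [if_pos ⟨k₀, hk₀⟩, Finset.sum_eq_single k₀]
    · rw [if_pos hk₀]
    · intro b _ hb
      exact if_neg fun hpb => hb (h b k₀ hpb hk₀)
    · intro h'; exact absurd (Finset.mem_univ k₀) h'
  · rw [if_neg hex, Finset.sum_eq_zero]
    intro k _; exact if_neg fun hk => hex ⟨k, hk⟩

lemma sum_ind_eq_ncard (p : F → Prop) [DecidablePred p] :
    ∑ k, (if p k then (1:ℂ) else 0) = ({x | p x}.ncard : ℂ) := by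
  rw [Finset.sum_boole]
  congr 1
  rw [Set.ncard_eq_toFinset_card', Set.toFinset_setOf]

lemma sum_mul_offdiag_zero (f g : F → ℂ)
    (h : ∀ c d, c ≠ d → f c * g d = 0) :
    (∑ c, f c) * (∑ d, g d) = ∑ c, f c * g c := by
  rw [Finset.sum_mul_sum]
  refine Finset.sum_congr rfl fun c _ => ?_
  rw [Finset.sum_eq_single c]
  · intro d _ hd; exact h c d (Ne.symm hd)
  · intro h'; exact absurd (Finset.mem_univ c) h'

lemma sum4_comm (h : F → F → F → F → ℂ) :
    ∑ c, ∑ c', ∑ b, ∑ b', h c c' b b' = ∑ b, ∑ b', ∑ c, ∑ c', h c c' b b' :=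
  calc ∑ c, ∑ c', ∑ b, ∑ b', h c c' b b'
      = ∑ c, ∑ b, ∑ c', ∑ b', h c c' b b' :=
        Finset.sum_congr rfl fun c _ => Finset.sum_comm
    _ = ∑ b, ∑ c, ∑ c', ∑ b', h c c' b b' := Finset.sum_comm
    _ = ∑ b, ∑ c, ∑ b', ∑ c', h c c' b b' :=
        Finset.sum_congr rfl fun b _ => Finset.sum_congr rfl fun c _ => Finset.sum_comm
    _ = ∑ b, ∑ b', ∑ c, ∑ c', h c c' b b' :=
        Finset.sum_congr rfl fun b _ => Finset.sum_comm

lemma conj_sum_mul_conj (φ : F → F → ℂ) (c c' : F) :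
    (starRingEnd ℂ) (∑ b, φ b c * (starRingEnd ℂ) (φ b c'))
      = ∑ b, (starRingEnd ℂ) (φ b c) * φ b c' := by
  rw [map_sum]
  exact Finset.sum_congr rfl fun b _ => by rw [_root_.map_mul, Complex.conj_conj]

lemma sum_conj_swap (φ : F → F → ℂ) :
    (∑ c, ∑ c', (∑ b, φ b c * (starRingEnd ℂ) (φ b c')) *
        (starRingEnd ℂ) (∑ b, φ b c * (starRingEnd ℂ) (φ b c'))) =
    ∑ b, ∑ b', (∑ c, φ b c * (starRingEnd ℂ) (φ b' c)) *
        (starRingEnd ℂ) (∑ c, φ b c * (starRingEnd ℂ) (φ b' c)) := by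
  have key : ∀ c c' b b', (φ b c * (starRingEnd ℂ) (φ b c')) *
      ((starRingEnd ℂ) (φ b' c) * φ b' c')
      = (φ b c * (starRingEnd ℂ) (φ b' c)) * ((starRingEnd ℂ) (φ b c') * φ b' c') := by
    intro c c' b b'; ring
  calc (∑ c, ∑ c', (∑ b, φ b c * (starRingEnd ℂ) (φ b c')) *
        (starRingEnd ℂ) (∑ b, φ b c * (starRingEnd ℂ) (φ b c')))
      = ∑ c, ∑ c', ∑ b, ∑ b', (φ b c * (starRingEnd ℂ) (φ b c')) *
          ((starRingEnd ℂ) (φ b' c) * φ b' c') := by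
        refine Finset.sum_congr rfl fun c _ => Finset.sum_congr rfl fun c' _ => ?_
        rw [conj_sum_mul_conj, Finset.sum_mul_sum]
    _ = ∑ b, ∑ b', ∑ c, ∑ c', (φ b c * (starRingEnd ℂ) (φ b c')) *
          ((starRingEnd ℂ) (φ b' c) * φ b' c') := sum4_comm _
    _ = ∑ b, ∑ b', (∑ c, φ b c * (starRingEnd ℂ) (φ b' c)) *
        (starRingEnd ℂ) (∑ c, φ b c * (starRingEnd ℂ) (φ b' c)) := by
        refine Finset.sum_congr rfl fun b _ => Finset.sum_congr rfl fun b' _ => ?_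
        rw [map_sum, Finset.sum_mul_sum]
        refine Finset.sum_congr rfl fun c _ => Finset.sum_congr rfl fun c' _ => ?_
        rw [_root_.map_mul, Complex.conj_conj]
        ring

lemma unitary_contract (w : Matrix F F ℂ)
    (hdelta : ∀ x y : F, (∑ k, w k x * (starRingEnd ℂ) (w k y)) = if x = y then 1 else 0)
    (u u' : F → ℂ) :
    ∑ k, (∑ x, u x * w k x) * (starRingEnd ℂ) (∑ y, u' y * w k y)
      = ∑ x, u x * (starRingEnd ℂ) (u' x) := by
  have e1 : ∀ k, (∑ x, u x * w k x) * (starRingEnd ℂ) (∑ y, u' y * w k y)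
      = ∑ x, ∑ y, (u x * (starRingEnd ℂ) (u' y)) * (w k x * (starRingEnd ℂ) (w k y)) := by
    intro k
    rw [map_sum, Finset.sum_mul_sum]
    refine Finset.sum_congr rfl fun x _ => Finset.sum_congr rfl fun y _ => ?_
    rw [_root_.map_mul]; ring
  calc ∑ k, (∑ x, u x * w k x) * (starRingEnd ℂ) (∑ y, u' y * w k y)
      = ∑ k, ∑ x, ∑ y, (u x * (starRingEnd ℂ) (u' y)) * (w k x * (starRingEnd ℂ) (w k y)) :=
        Finset.sum_congr rfl fun k _ => e1 k
    _ = ∑ x, ∑ k, ∑ y, (u x * (starRingEnd ℂ) (u' y)) * (w k x * (starRingEnd ℂ) (w k y)) :=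
        Finset.sum_comm
    _ = ∑ x, ∑ y, ∑ k, (u x * (starRingEnd ℂ) (u' y)) * (w k x * (starRingEnd ℂ) (w k y)) :=
        Finset.sum_congr rfl fun x _ => Finset.sum_comm
    _ = ∑ x, ∑ y, (u x * (starRingEnd ℂ) (u' y)) * (if x = y then 1 else 0) := by
        refine Finset.sum_congr rfl fun x _ => Finset.sum_congr rfl fun y _ => ?_
        rw [← Finset.mul_sum, hdelta]
    _ = ∑ x, u x * (starRingEnd ℂ) (u' x) := by
        refine Finset.sum_congr rfl fun x _ => ?_
        simp [mul_ite, Finset.sum_ite_eq]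


variable {q : ℕ} {T : Set (F × F × F)} [DecidablePred (· ∈ T)]

section TP
variable (hT : IsTrianglePresentation q T)
include hT

lemma uniq1 {a a' b c : F} (h : (a,b,c) ∈ T) (h' : (a',b,c) ∈ T) : a = a' :=
  hT.2.1 b c a a' (hT.1 _ _ _ (hT.1 _ _ _ h)) (hT.1 _ _ _ (hT.1 _ _ _ h'))

lemma uniq2 {a b b' c : F} (h : (a,b,c) ∈ T) (h' : (a,b',c) ∈ T) : b = b' :=
  hT.2.1 c a b b' (hT.1 _ _ _ h) (hT.1 _ _ _ h')

lemma sum_succ_ind (a : F) :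
    ∑ b, (if ∃ k, (a,b,k) ∈ T then (1:ℂ) else 0) = (q:ℂ) + 1 := by
  have h := (hT.2.2.2 a).2
  rw [sum_ind_eq_ncard, h]
  push_cast
  ring

lemma sum_pred_ind (a : F) :
    ∑ b, (if ∃ k, (b,a,k) ∈ T then (1:ℂ) else 0) = (q:ℂ) + 1 := by
  have h := (hT.2.2.2 a).1
  rw [sum_ind_eq_ncard, h]
  push_cast
  ring

lemma succ_pair_count (a a' : F) :
    (∑ b, (if ∃ k, (a,b,k) ∈ T then (1:ℂ) else 0) * (if ∃ k, (a',b,k) ∈ T then (1:ℂ) else 0))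
      = if a = a' then ((q:ℂ)+1) else 1 := by
  by_cases h : a = a'
  · subst h
    rw [if_pos rfl, ← sum_succ_ind hT a]
    refine Finset.sum_congr rfl fun b _ => ?_
    by_cases hb : ∃ k, (a,b,k) ∈ T <;> simp [hb]
  · rw [if_neg h]
    obtain ⟨s₀, hs₀, huniq⟩ := (hT.2.2.1 a a' h).2
    have : ∀ b, (if ∃ k, (a,b,k) ∈ T then (1:ℂ) else 0) * (if ∃ k, (a',b,k) ∈ T then (1:ℂ) else 0)
        = if (∃ k, (a,b,k) ∈ T) ∧ (∃ k, (a',b,k) ∈ T) then 1 else 0 := fun b =>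
      ind_mul_ind _ _
    rw [Finset.sum_congr rfl fun b _ => this b,
      sum_ind_unique _ (fun x y hx hy => (huniq x hx).trans (huniq y hy).symm),
      if_pos ⟨s₀, hs₀⟩]

lemma pred_pair_count (a a' : F) :
    (∑ c, (if ∃ k, (c,a,k) ∈ T then (1:ℂ) else 0) * (if ∃ k, (c,a',k) ∈ T then (1:ℂ) else 0))
      = if a = a' then ((q:ℂ)+1) else 1 := by
  by_cases h : a = a'
  · subst h
    rw [if_pos rfl, ← sum_pred_ind hT a]
    refine Finset.sum_congr rfl fun b _ => ?_
    by_cases hb : ∃ k, (b,a,k) ∈ T <;> simp [hb]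
  · rw [if_neg h]
    obtain ⟨s₀, hs₀, huniq⟩ := (hT.2.2.1 a a' h).1
    have : ∀ c, (if ∃ k, (c,a,k) ∈ T then (1:ℂ) else 0) * (if ∃ k, (c,a',k) ∈ T then (1:ℂ) else 0)
        = if (∃ k, (c,a,k) ∈ T) ∧ (∃ k, (c,a',k) ∈ T) then 1 else 0 := fun c =>
      ind_mul_ind _ _
    rw [Finset.sum_congr rfl fun c _ => this c,
      sum_ind_unique _ (fun x y hx hy => (huniq x hx).trans (huniq y hy).symm),
      if_pos ⟨s₀, hs₀⟩]

end TP

section Row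

variable {F : Type*} [Fintype F] [DecidableEq F]

private lemma pair_weight (t : F → ℂ) (ht : ∑ a, t a = 1) (q : ℕ) :
    ∑ a, ∑ a', (t a * t a') * (if a = a' then ((q:ℂ)+1) else 1)
      = 1 + (q:ℂ) * ∑ a, t a * t a := by
  have step : ∀ a a', (t a * t a') * (if a = a' then ((q:ℂ)+1) else 1)
      = t a * t a' + (if a = a' then (q:ℂ) * (t a * t a') else 0) := by
    intro a a'
    by_cases h : a = a' <;> simp [h] <;> ring
  calc ∑ a, ∑ a', (t a * t a') * (if a = a' then ((q:ℂ)+1) else 1)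
      = ∑ a, ∑ a', (t a * t a' + (if a = a' then (q:ℂ) * (t a * t a') else 0)) := by
        exact Finset.sum_congr rfl fun a _ => Finset.sum_congr rfl fun a' _ => step a a'
    _ = (∑ a, ∑ a', t a * t a') + ∑ a, ∑ a', (if a = a' then (q:ℂ) * (t a * t a') else 0) := by
        simp [Finset.sum_add_distrib]
    _ = 1 + (q:ℂ) * ∑ a, t a * t a := by
        have h1 : (∑ a, ∑ a', t a * t a') = 1 := by
          rw [← Finset.sum_mul_sum, ht, one_mul]
        have h2 : (∑ a, ∑ a', (if a = a' then (q:ℂ) * (t a * t a') else 0))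
            = (q:ℂ) * ∑ a, t a * t a := by
          rw [Finset.mul_sum]
          refine Finset.sum_congr rfl fun a _ => ?_
          simp [Finset.sum_ite_eq]
        rw [h1, h2]

variable (T₁ : Set (F × F × F)) [DecidablePred (· ∈ T₁)] (w : Matrix F F ℂ) (i : F)

private noncomputable def chi : F × F × F → ℂ := fun x => if x ∈ T₁ then 1 else 0

private noncomputable def ff (b c : F) : ℂ := ∑ a, chi T₁ (a, b, c) * w i a

private noncomputable def vv (j c : F) : ℂ := ∑ b, ff T₁ w i b c * w j b

private noncomputable def tt (a : F) : ℂ := w i a * (starRingEnd ℂ) (w i a)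

private noncomputable def XX (b c : F) : ℂ := ∑ a, chi T₁ (a, b, c) * tt w i a

private noncomputable def gg (b b' : F) : ℂ := ∑ c, ff T₁ w i b c * (starRingEnd ℂ) (ff T₁ w i b' c)

private noncomputable def OO (b b' : F) : ℂ := ∑ c, XX T₁ w i b c * XX T₁ w i b' c

private lemma conj_chi (x : F × F × F) : (starRingEnd ℂ) (chi T₁ x) = chi T₁ x := by
  simp [chi, apply_ite]

private lemma conj_tt (a : F) : (starRingEnd ℂ) (tt w i a) = tt w i a := by
  rw [tt, _root_.map_mul, Complex.conj_conj]; ring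

private lemma ff_ne_zero {b c : F} (h : ff T₁ w i b c ≠ 0) : ∃ a, (a, b, c) ∈ T₁ := by
  by_contra hno
  push_neg at hno
  exact h (Finset.sum_eq_zero fun a _ => by simp [chi, hno a])

private lemma conj_ff (b c : F) :
    (starRingEnd ℂ) (ff T₁ w i b c) = ∑ a, chi T₁ (a, b, c) * (starRingEnd ℂ) (w i a) := by
  rw [ff, map_sum]
  exact Finset.sum_congr rfl fun a _ => by rw [_root_.map_mul, conj_chi]

end Row

section Row2

variable {F : Type*} [Fintype F] [DecidableEq F]
variable {q : ℕ} (T₁ T₂ : Set (F × F × F)) [DecidablePred (· ∈ T₁)] [DecidablePred (· ∈ T₂)]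
  (w : Matrix F F ℂ) (i : F)

private lemma hdelta_col (hw1 : wᴴ * w = 1) (x y : F) :
    (∑ k, w k x * (starRingEnd ℂ) (w k y)) = if x = y then 1 else 0 := by
  have h0 : (wᴴ * w) x y = (1 : Matrix F F ℂ) x y := by rw [hw1]
  rw [Matrix.mul_apply, Matrix.one_apply] at h0
  simp only [Matrix.conjTranspose_apply] at h0
  have h1 := congrArg (starRingEnd ℂ) h0
  simpa [map_sum, _root_.map_mul, Complex.conj_conj, apply_ite] using h1

private lemma sum_tt (hw2 : w * wᴴ = 1) : ∑ a, tt w i a = 1 := by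
  have h0 : (w * wᴴ) i i = (1 : Matrix F F ℂ) i i := by rw [hw2]
  rw [Matrix.mul_apply, Matrix.one_apply_eq] at h0
  simp only [Matrix.conjTranspose_apply] at h0
  simpa [tt] using h0

private lemma ff_mul_conj (hT₁ : IsTrianglePresentation q T₁) (b c : F) :
    ff T₁ w i b c * (starRingEnd ℂ) (ff T₁ w i b c) = XX T₁ w i b c := by
  rw [conj_ff, ff, XX]
  rw [sum_mul_offdiag_zero]
  · refine Finset.sum_congr rfl fun a _ => ?_
    by_cases h : (a, b, c) ∈ T₁
    · simp only [chi, if_pos h, tt]; ring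
    · simp [chi, if_neg h]
  · intro a a' hne
    by_cases h1 : (a, b, c) ∈ T₁
    · by_cases h2 : (a', b, c) ∈ T₁
      · exact absurd (uniq1 hT₁ h1 h2) hne
      · simp [chi, if_neg h2]
    · simp [chi, if_neg h1]

private lemma XX_mul_self (hT₁ : IsTrianglePresentation q T₁) (b c : F) :
    XX T₁ w i b c * XX T₁ w i b c = ∑ a, chi T₁ (a, b, c) * (tt w i a * tt w i a) := by
  rw [XX, sum_mul_offdiag_zero]
  · refine Finset.sum_congr rfl fun a _ => ?_
    by_cases h : (a, b, c) ∈ T₁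
    · simp only [chi, if_pos h]; ring
    · simp [chi, if_neg h]
  · intro a a' hne
    by_cases h1 : (a, b, c) ∈ T₁
    · by_cases h2 : (a', b, c) ∈ T₁
      · exact absurd (uniq1 hT₁ h1 h2) hne
      · simp [chi, if_neg h2]
    · simp [chi, if_neg h1]

private lemma sum_chi_c (hT₁ : IsTrianglePresentation q T₁) (a b : F) :
    ∑ c, chi T₁ (a, b, c) = if ∃ k, (a, b, k) ∈ T₁ then 1 else 0 := by
  simp only [chi]
  exact sum_ind_unique _ (fun x y hx hy => hT₁.2.1 a b x y hx hy)

private lemma sum_chi_b (hT₁ : IsTrianglePresentation q T₁) (a c : F) :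
    ∑ b, chi T₁ (a, b, c) = if ∃ k, (c, a, k) ∈ T₁ then 1 else 0 := by
  simp only [chi]
  rw [sum_ind_unique _ (fun x y hx hy => uniq2 hT₁ hx hy)]
  refine if_congr ?_ rfl rfl
  constructor
  · rintro ⟨b, hb⟩; exact ⟨b, hT₁.1 _ _ _ hb⟩
  · rintro ⟨k, hk⟩; exact ⟨k, hT₁.1 _ _ _ (hT₁.1 _ _ _ hk)⟩

private lemma gg_diag (hT₁ : IsTrianglePresentation q T₁) (b : F) :
    gg T₁ w i b b = ∑ a, (if ∃ k, (a, b, k) ∈ T₁ then 1 else 0) * tt w i a := by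
  rw [gg]
  calc ∑ c, ff T₁ w i b c * (starRingEnd ℂ) (ff T₁ w i b c)
      = ∑ c, ∑ a, chi T₁ (a, b, c) * tt w i a :=
        Finset.sum_congr rfl fun c _ => by rw [ff_mul_conj T₁ w i hT₁, XX]
    _ = ∑ a, ∑ c, chi T₁ (a, b, c) * tt w i a := Finset.sum_comm
    _ = ∑ a, (if ∃ k, (a, b, k) ∈ T₁ then 1 else 0) * tt w i a := by
        refine Finset.sum_congr rfl fun a _ => ?_
        rw [← Finset.sum_mul, sum_chi_c T₁ hT₁]

private lemma sum_gg_diag (hT₁ : IsTrianglePresentation q T₁) (hw2 : w * wᴴ = 1) :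
    ∑ b, gg T₁ w i b b * (starRingEnd ℂ) (gg T₁ w i b b)
      = 1 + (q:ℂ) * ∑ a, tt w i a * tt w i a := by
  have hconjg : ∀ b, (starRingEnd ℂ) (gg T₁ w i b b)
      = ∑ a, (if ∃ k, (a, b, k) ∈ T₁ then 1 else 0) * tt w i a := by
    intro b
    rw [gg_diag T₁ w i hT₁, map_sum]
    refine Finset.sum_congr rfl fun a _ => ?_
    rw [_root_.map_mul, conj_tt, apply_ite (starRingEnd ℂ), _root_.map_one, _root_.map_zero]
  calc ∑ b, gg T₁ w i b b * (starRingEnd ℂ) (gg T₁ w i b b)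
      = ∑ b, ∑ a, ∑ a', ((if ∃ k, (a, b, k) ∈ T₁ then 1 else 0) * tt w i a)
          * ((if ∃ k, (a', b, k) ∈ T₁ then 1 else 0) * tt w i a') := by
        refine Finset.sum_congr rfl fun b _ => ?_
        rw [hconjg b, gg_diag T₁ w i hT₁, Finset.sum_mul_sum]
    _ = ∑ a, ∑ b, ∑ a', ((if ∃ k, (a, b, k) ∈ T₁ then 1 else 0) * tt w i a)
          * ((if ∃ k, (a', b, k) ∈ T₁ then 1 else 0) * tt w i a') := Finset.sum_comm
    _ = ∑ a, ∑ a', ∑ b, ((if ∃ k, (a, b, k) ∈ T₁ then 1 else 0) * tt w i a)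
          * ((if ∃ k, (a', b, k) ∈ T₁ then 1 else 0) * tt w i a') :=
        Finset.sum_congr rfl fun a _ => Finset.sum_comm
    _ = ∑ a, ∑ a', (tt w i a * tt w i a')
          * (if a = a' then ((q:ℂ)+1) else 1) := by
        refine Finset.sum_congr rfl fun a _ => Finset.sum_congr rfl fun a' _ => ?_
        rw [← succ_pair_count hT₁ a a', Finset.mul_sum]
        refine Finset.sum_congr rfl fun b _ => by ring
    _ = 1 + (q:ℂ) * ∑ a, tt w i a * tt w i a :=
        pair_weight _ (sum_tt w i hw2) q

end Row2

section Row3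

variable {F : Type*} [Fintype F] [DecidableEq F]
variable {q : ℕ} (T₁ T₂ : Set (F × F × F)) [DecidablePred (· ∈ T₁)] [DecidablePred (· ∈ T₂)]
  (ω : F × F × F → ℂ) (w : Matrix F F ℂ) (i : F)

private lemma sum_XX_b (hT₁ : IsTrianglePresentation q T₁) (c : F) :
    ∑ b, XX T₁ w i b c = ∑ a, (if ∃ k, (c, a, k) ∈ T₁ then 1 else 0) * tt w i a := by
  simp only [XX]
  rw [Finset.sum_comm]
  refine Finset.sum_congr rfl fun a _ => ?_
  rw [← Finset.sum_mul, sum_chi_b T₁ hT₁]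

private lemma sum_OO_all (hT₁ : IsTrianglePresentation q T₁) (hw2 : w * wᴴ = 1) :
    ∑ b, ∑ b', OO T₁ w i b b' = 1 + (q:ℂ) * ∑ a, tt w i a * tt w i a := by
  calc ∑ b, ∑ b', OO T₁ w i b b'
      = ∑ b, ∑ b', ∑ c, XX T₁ w i b c * XX T₁ w i b' c := rfl
    _ = ∑ b, ∑ c, ∑ b', XX T₁ w i b c * XX T₁ w i b' c :=
        Finset.sum_congr rfl fun b _ => Finset.sum_comm
    _ = ∑ c, ∑ b, ∑ b', XX T₁ w i b c * XX T₁ w i b' c := Finset.sum_comm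
    _ = ∑ c, (∑ a, (if ∃ k, (c, a, k) ∈ T₁ then 1 else 0) * tt w i a)
          * (∑ a', (if ∃ k, (c, a', k) ∈ T₁ then 1 else 0) * tt w i a') := by
        refine Finset.sum_congr rfl fun c _ => ?_
        rw [← Finset.sum_mul_sum]
        rw [← sum_XX_b T₁ w i hT₁ c]
    _ = ∑ c, ∑ a, ∑ a', ((if ∃ k, (c, a, k) ∈ T₁ then 1 else 0) * tt w i a)
          * ((if ∃ k, (c, a', k) ∈ T₁ then 1 else 0) * tt w i a') := by
        refine Finset.sum_congr rfl fun c _ => by rw [Finset.sum_mul_sum]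
    _ = ∑ a, ∑ c, ∑ a', ((if ∃ k, (c, a, k) ∈ T₁ then 1 else 0) * tt w i a)
          * ((if ∃ k, (c, a', k) ∈ T₁ then 1 else 0) * tt w i a') := Finset.sum_comm
    _ = ∑ a, ∑ a', ∑ c, ((if ∃ k, (c, a, k) ∈ T₁ then 1 else 0) * tt w i a)
          * ((if ∃ k, (c, a', k) ∈ T₁ then 1 else 0) * tt w i a') :=
        Finset.sum_congr rfl fun a _ => Finset.sum_comm
    _ = ∑ a, ∑ a', (tt w i a * tt w i a') * (if a = a' then ((q:ℂ)+1) else 1) := by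
        refine Finset.sum_congr rfl fun a _ => Finset.sum_congr rfl fun a' _ => ?_
        rw [← pred_pair_count hT₁ a a', Finset.mul_sum]
        exact Finset.sum_congr rfl fun c _ => by ring
    _ = 1 + (q:ℂ) * ∑ a, tt w i a * tt w i a := pair_weight _ (sum_tt w i hw2) q

private lemma sum_OO_diag (hT₁ : IsTrianglePresentation q T₁) :
    ∑ b, OO T₁ w i b b = ((q:ℂ)+1) * ∑ a, tt w i a * tt w i a := by
  calc ∑ b, OO T₁ w i b b
      = ∑ b, ∑ c, ∑ a, chi T₁ (a, b, c) * (tt w i a * tt w i a) :=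
        Finset.sum_congr rfl fun b _ => Finset.sum_congr rfl fun c _ =>
          XX_mul_self T₁ w i hT₁ b c
    _ = ∑ b, ∑ a, ∑ c, chi T₁ (a, b, c) * (tt w i a * tt w i a) :=
        Finset.sum_congr rfl fun b _ => Finset.sum_comm
    _ = ∑ a, ∑ b, ∑ c, chi T₁ (a, b, c) * (tt w i a * tt w i a) := Finset.sum_comm
    _ = ∑ a, ((q:ℂ)+1) * (tt w i a * tt w i a) := by
        refine Finset.sum_congr rfl fun a _ => ?_
        have h1 : ∀ b, ∑ c, chi T₁ (a, b, c) * (tt w i a * tt w i a)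
            = (if ∃ k, (a, b, k) ∈ T₁ then 1 else 0) * (tt w i a * tt w i a) := by
          intro b; rw [← Finset.sum_mul, sum_chi_c T₁ hT₁]
        rw [Finset.sum_congr rfl fun b _ => h1 b, ← Finset.sum_mul, sum_succ_ind hT₁ a]
    _ = ((q:ℂ)+1) * ∑ a, tt w i a * tt w i a := by rw [Finset.mul_sum]

private lemma gg_off (hT₁ : IsTrianglePresentation q T₁) {b b' : F} (hbb : b ≠ b') :
    gg T₁ w i b b' * (starRingEnd ℂ) (gg T₁ w i b b') = OO T₁ w i b b' := by
  have hconjg : (starRingEnd ℂ) (gg T₁ w i b b')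
      = ∑ c, (starRingEnd ℂ) (ff T₁ w i b c) * ff T₁ w i b' c := by
    rw [gg, map_sum]
    exact Finset.sum_congr rfl fun c _ => by rw [_root_.map_mul, Complex.conj_conj]
  have hzero : ∀ c d, c ≠ d →
      (ff T₁ w i b c * (starRingEnd ℂ) (ff T₁ w i b' c)) *
        ((starRingEnd ℂ) (ff T₁ w i b d) * ff T₁ w i b' d) = 0 := by
    intro c d hcd
    by_cases h1 : ff T₁ w i b c = 0
    · rw [h1]; ring
    by_cases h2 : ff T₁ w i b' c = 0
    · rw [h2]; simp
    by_cases h3 : ff T₁ w i b d = 0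
    · rw [h3]; simp
    by_cases h4 : ff T₁ w i b' d = 0
    · rw [h4]; ring
    exfalso
    obtain ⟨a1, ha1⟩ := ff_ne_zero T₁ w i h1
    obtain ⟨a2, ha2⟩ := ff_ne_zero T₁ w i h2
    obtain ⟨a3, ha3⟩ := ff_ne_zero T₁ w i h3
    obtain ⟨a4, ha4⟩ := ff_ne_zero T₁ w i h4
    obtain ⟨s₀, _, hu⟩ := (hT₁.2.2.1 b b' hbb).2
    have hc : c = s₀ := hu c ⟨⟨a1, hT₁.1 _ _ _ (hT₁.1 _ _ _ ha1)⟩, ⟨a2, hT₁.1 _ _ _ (hT₁.1 _ _ _ ha2)⟩⟩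
    have hd : d = s₀ := hu d ⟨⟨a3, hT₁.1 _ _ _ (hT₁.1 _ _ _ ha3)⟩, ⟨a4, hT₁.1 _ _ _ (hT₁.1 _ _ _ ha4)⟩⟩
    exact hcd (hc.trans hd.symm)
  have hggdef : gg T₁ w i b b' = ∑ c, ff T₁ w i b c * (starRingEnd ℂ) (ff T₁ w i b' c) := rfl
  have hOOdef : OO T₁ w i b b' = ∑ c, XX T₁ w i b c * XX T₁ w i b' c := rfl
  rw [hconjg, hggdef, hOOdef, sum_mul_offdiag_zero _ _ hzero]
  refine Finset.sum_congr rfl fun c _ => ?_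
  rw [← ff_mul_conj T₁ w i hT₁ b c, ← ff_mul_conj T₁ w i hT₁ b' c]
  ring

end Row3

section Row4

variable {F : Type*} [Fintype F] [DecidableEq F]
variable {q : ℕ} (T₁ T₂ : Set (F × F × F)) [DecidablePred (· ∈ T₁)] [DecidablePred (· ∈ T₂)]
  (ω : F × F × F → ℂ) (w : Matrix F F ℂ) (i : F)

private lemma vv_rel
    (hwE : ∀ i j k : F,
      (∑ a : F, ∑ b : F, ∑ c : F,
          w i a * w j b * w k c * (if (a, b, c) ∈ T₁ then 1 else 0)) =
        (if (i, j, k) ∈ T₂ then ω (i, j, k) else 0)) (j k : F) :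
    (∑ c, vv T₁ w i j c * w k c) = if (i, j, k) ∈ T₂ then ω (i, j, k) else 0 := by
  calc ∑ c, vv T₁ w i j c * w k c
      = ∑ c, ∑ b, ∑ a, w i a * w j b * w k c * (if (a, b, c) ∈ T₁ then 1 else 0) := by
        refine Finset.sum_congr rfl fun c _ => ?_
        rw [vv, Finset.sum_mul]
        refine Finset.sum_congr rfl fun b _ => ?_
        rw [ff, Finset.sum_mul, Finset.sum_mul]
        refine Finset.sum_congr rfl fun a _ => ?_
        simp only [chi]
        ring
    _ = ∑ b, ∑ c, ∑ a, w i a * w j b * w k c * (if (a, b, c) ∈ T₁ then 1 else 0) :=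
        Finset.sum_comm
    _ = ∑ b, ∑ a, ∑ c, w i a * w j b * w k c * (if (a, b, c) ∈ T₁ then 1 else 0) :=
        Finset.sum_congr rfl fun b _ => Finset.sum_comm
    _ = ∑ a, ∑ b, ∑ c, w i a * w j b * w k c * (if (a, b, c) ∈ T₁ then 1 else 0) :=
        Finset.sum_comm
    _ = if (i, j, k) ∈ T₂ then ω (i, j, k) else 0 := hwE i j k

private lemma ip_eval (hT₂ : IsTrianglePresentation q T₂)
    (hω : ∀ x ∈ T₂, ‖ω x‖ = 1) (hw1 : wᴴ * w = 1)
    (hwE : ∀ i j k : F,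
      (∑ a : F, ∑ b : F, ∑ c : F,
          w i a * w j b * w k c * (if (a, b, c) ∈ T₁ then 1 else 0)) =
        (if (i, j, k) ∈ T₂ then ω (i, j, k) else 0)) (j j' : F) :
    (∑ c, vv T₁ w i j c * (starRingEnd ℂ) (vv T₁ w i j' c))
      = if j = j' then (if ∃ k, (i, j, k) ∈ T₂ then 1 else 0) else 0 := by
  have step : (∑ c, vv T₁ w i j c * (starRingEnd ℂ) (vv T₁ w i j' c))
      = ∑ k, (if (i, j, k) ∈ T₂ then ω (i, j, k) else 0)
          * (starRingEnd ℂ) (if (i, j', k) ∈ T₂ then ω (i, j', k) else 0) := by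
    calc (∑ c, vv T₁ w i j c * (starRingEnd ℂ) (vv T₁ w i j' c))
        = ∑ k, (∑ c, vv T₁ w i j c * w k c) * (starRingEnd ℂ) (∑ c, vv T₁ w i j' c * w k c) :=
          (unitary_contract w (hdelta_col w hw1) _ _).symm
      _ = ∑ k, (if (i, j, k) ∈ T₂ then ω (i, j, k) else 0)
          * (starRingEnd ℂ) (if (i, j', k) ∈ T₂ then ω (i, j', k) else 0) := by
          refine Finset.sum_congr rfl fun k _ => ?_
          rw [vv_rel T₁ T₂ ω w i hwE j k, vv_rel T₁ T₂ ω w i hwE j' k]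
  rw [step]
  by_cases hjj : j = j'
  · subst hjj
    rw [if_pos rfl]
    have e : ∀ k, (if (i, j, k) ∈ T₂ then ω (i, j, k) else 0)
        * (starRingEnd ℂ) (if (i, j, k) ∈ T₂ then ω (i, j, k) else 0)
        = if (i, j, k) ∈ T₂ then 1 else 0 := by
      intro k
      by_cases hk : (i, j, k) ∈ T₂
      · rw [if_pos hk, Complex.mul_conj]
        have h1 : Complex.normSq (ω (i, j, k)) = 1 := by
          rw [Complex.normSq_eq_norm_sq, hω _ hk]; norm_num
        rw [h1, Complex.ofReal_one, if_pos hk]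
      · simp [hk]
    rw [Finset.sum_congr rfl fun k _ => e k]
    exact sum_ind_unique _ (fun k k' hk hk' => hT₂.2.1 i j k k' hk hk')
  · rw [if_neg hjj]
    refine Finset.sum_eq_zero fun k _ => ?_
    by_cases h1 : (i, j, k) ∈ T₂
    · by_cases h2 : (i, j', k) ∈ T₂
      · exact absurd (hT₂.2.1 k i j j' (hT₂.1 _ _ _ h1) (hT₂.1 _ _ _ h2)) hjj
      · rw [if_neg h2]; simp
    · rw [if_neg h1]; simp

private lemma main_sum (hT₂ : IsTrianglePresentation q T₂)
    (hω : ∀ x ∈ T₂, ‖ω x‖ = 1) (hw1 : wᴴ * w = 1)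
    (hwE : ∀ i j k : F,
      (∑ a : F, ∑ b : F, ∑ c : F,
          w i a * w j b * w k c * (if (a, b, c) ∈ T₁ then 1 else 0)) =
        (if (i, j, k) ∈ T₂ then ω (i, j, k) else 0)) :
    ∑ b, ∑ b', gg T₁ w i b b' * (starRingEnd ℂ) (gg T₁ w i b b') = (q:ℂ) + 1 := by
  calc ∑ b, ∑ b', gg T₁ w i b b' * (starRingEnd ℂ) (gg T₁ w i b b')
      = ∑ c, ∑ c', (∑ b, ff T₁ w i b c * (starRingEnd ℂ) (ff T₁ w i b c')) *
          (starRingEnd ℂ) (∑ b, ff T₁ w i b c * (starRingEnd ℂ) (ff T₁ w i b c')) :=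
        (sum_conj_swap (fun b c => ff T₁ w i b c)).symm
    _ = ∑ c, ∑ c', (∑ j, vv T₁ w i j c * (starRingEnd ℂ) (vv T₁ w i j c')) *
          (starRingEnd ℂ) (∑ j, vv T₁ w i j c * (starRingEnd ℂ) (vv T₁ w i j c')) := by
        refine Finset.sum_congr rfl fun c _ => Finset.sum_congr rfl fun c' _ => ?_
        have key : (∑ j, vv T₁ w i j c * (starRingEnd ℂ) (vv T₁ w i j c'))
            = ∑ b, ff T₁ w i b c * (starRingEnd ℂ) (ff T₁ w i b c') :=
          unitary_contract w (hdelta_col w hw1) (fun b => ff T₁ w i b c)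
            (fun b => ff T₁ w i b c')
        rw [key]
    _ = ∑ j, ∑ j', (∑ c, vv T₁ w i j c * (starRingEnd ℂ) (vv T₁ w i j' c)) *
          (starRingEnd ℂ) (∑ c, vv T₁ w i j c * (starRingEnd ℂ) (vv T₁ w i j' c)) :=
        sum_conj_swap (fun j c => vv T₁ w i j c)
    _ = ∑ j, ∑ j', (if j = j' then (if ∃ k, (i, j, k) ∈ T₂ then 1 else 0) else 0) *
          (starRingEnd ℂ) (if j = j' then (if ∃ k, (i, j, k) ∈ T₂ then 1 else 0) else 0) := by
        refine Finset.sum_congr rfl fun j _ => Finset.sum_congr rfl fun j' _ => ?_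
        rw [ip_eval T₁ T₂ ω w i hT₂ hω hw1 hwE j j']
    _ = ∑ j, (if ∃ k, (i, j, k) ∈ T₂ then 1 else 0) := by
        refine Finset.sum_congr rfl fun j _ => ?_
        have e : ∀ j', (if j = j' then (if ∃ k, (i, j, k) ∈ T₂ then 1 else 0) else 0) *
            (starRingEnd ℂ) (if j = j' then (if ∃ k, (i, j, k) ∈ T₂ then 1 else 0) else 0)
            = if j = j' then (if ∃ k, (i, j, k) ∈ T₂ then (1:ℂ) else 0) else 0 := by
          intro j'
          by_cases hjj : j = j'
          · subst hjj
            by_cases hk : ∃ k, (i, j, k) ∈ T₂ <;> simp [hk]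
          · simp [hjj]
        rw [Finset.sum_congr rfl fun j' _ => e j']
        simp [Finset.sum_ite_eq]
    _ = (q:ℂ) + 1 := by
        rw [sum_ind_eq_ncard, (hT₂.2.2.2 i).2]
        push_cast; ring

private lemma QQ_eq_one (hq : 2 ≤ q)
    (hT₁ : IsTrianglePresentation q T₁) (hT₂ : IsTrianglePresentation q T₂)
    (hω : ∀ x ∈ T₂, ‖ω x‖ = 1) (hw1 : wᴴ * w = 1) (hw2 : w * wᴴ = 1)
    (hwE : ∀ i j k : F,
      (∑ a : F, ∑ b : F, ∑ c : F,
          w i a * w j b * w k c * (if (a, b, c) ∈ T₁ then 1 else 0)) =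
        (if (i, j, k) ∈ T₂ then ω (i, j, k) else 0)) :
    ∑ a, tt w i a * tt w i a = 1 := by
  set Q : ℂ := ∑ a, tt w i a * tt w i a with hQdef
  have hmain := main_sum T₁ T₂ ω w i hT₂ hω hw1 hwE
  have hsplit : ∀ b b', gg T₁ w i b b' * (starRingEnd ℂ) (gg T₁ w i b b')
      = OO T₁ w i b b' + (if b = b' then
          gg T₁ w i b b * (starRingEnd ℂ) (gg T₁ w i b b) - OO T₁ w i b b else 0) := by
    intro b b'
    by_cases h : b = b'
    · subst h; rw [if_pos rfl]; ring
    · rw [if_neg h, add_zero]; exact gg_off T₁ w i hT₁ h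
  have hcomb : ∑ b, ∑ b', gg T₁ w i b b' * (starRingEnd ℂ) (gg T₁ w i b b')
      = (1 + (q:ℂ) * Q) + ((1 + (q:ℂ) * Q) - ((q:ℂ)+1) * Q) := by
    calc ∑ b, ∑ b', gg T₁ w i b b' * (starRingEnd ℂ) (gg T₁ w i b b')
        = ∑ b, ∑ b', (OO T₁ w i b b' + (if b = b' then
            gg T₁ w i b b * (starRingEnd ℂ) (gg T₁ w i b b) - OO T₁ w i b b else 0)) :=
          Finset.sum_congr rfl fun b _ => Finset.sum_congr rfl fun b' _ => hsplit b b'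
      _ = (∑ b, ∑ b', OO T₁ w i b b') + ∑ b, ∑ b', (if b = b' then
            gg T₁ w i b b * (starRingEnd ℂ) (gg T₁ w i b b) - OO T₁ w i b b else 0) := by
          simp [Finset.sum_add_distrib]
      _ = (1 + (q:ℂ) * Q) + ∑ b, (gg T₁ w i b b * (starRingEnd ℂ) (gg T₁ w i b b)
            - OO T₁ w i b b) := by
          rw [sum_OO_all T₁ w i hT₁ hw2]
          congr 1
          refine Finset.sum_congr rfl fun b _ => ?_
          simp [Finset.sum_ite_eq]
      _ = (1 + (q:ℂ) * Q) + ((1 + (q:ℂ) * Q) - ((q:ℂ)+1) * Q) := by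
          rw [Finset.sum_sub_distrib, sum_gg_diag T₁ w i hT₁ hw2, sum_OO_diag T₁ w i hT₁]
  have hqne : ((q:ℂ) - 1) ≠ 0 := by
    have h1 : (q:ℂ) ≠ 1 := by
      intro h; have : q = 1 := by exact_mod_cast h
      omega
    exact sub_ne_zero.2 h1
  have h2 : ((q:ℂ) - 1) * Q = ((q:ℂ) - 1) * 1 := by
    linear_combination (hcomb.symm.trans hmain)
  exact mul_left_cancel₀ hqne h2

private lemma row_existsUnique (hq : 2 ≤ q)
    (hT₁ : IsTrianglePresentation q T₁) (hT₂ : IsTrianglePresentation q T₂)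
    (hω : ∀ x ∈ T₂, ‖ω x‖ = 1) (hw1 : wᴴ * w = 1) (hw2 : w * wᴴ = 1)
    (hwE : ∀ i j k : F,
      (∑ a : F, ∑ b : F, ∑ c : F,
          w i a * w j b * w k c * (if (a, b, c) ∈ T₁ then 1 else 0)) =
        (if (i, j, k) ∈ T₂ then ω (i, j, k) else 0)) :
    ∃! j : F, w i j ≠ 0 := by
  set u : F → ℝ := fun a => Complex.normSq (w i a) with hu
  have htt : ∀ a, tt w i a = ((u a : ℝ) : ℂ) := fun a => by
    rw [tt, Complex.mul_conj]
  have hsum1 : ∑ a, u a = 1 := by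
    have h := sum_tt w i hw2
    rw [Finset.sum_congr rfl fun a _ => htt a] at h
    exact_mod_cast h
  have hsum2 : ∑ a, u a * u a = 1 := by
    have h := QQ_eq_one T₁ T₂ ω w i hq hT₁ hT₂ hω hw1 hw2 hwE
    rw [Finset.sum_congr rfl fun a (_ : a ∈ Finset.univ) => by
      rw [htt a, ← Complex.ofReal_mul]] at h
    rw [← Complex.ofReal_sum] at h
    exact_mod_cast h
  have hnn : ∀ a, 0 ≤ u a := fun a => Complex.normSq_nonneg _
  have hle1 : ∀ a, u a ≤ 1 := by
    intro a
    rw [← hsum1]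
    exact Finset.single_le_sum (fun b _ => hnn b) (Finset.mem_univ a)
  have h01 : ∀ a, u a = 0 ∨ u a = 1 := by
    have hz : ∑ a, (u a - u a * u a) = 0 := by
      rw [Finset.sum_sub_distrib, hsum1, hsum2, sub_self]
    intro a
    have h := (Finset.sum_eq_zero_iff_of_nonneg
      (fun b _ => by nlinarith [hnn b, hle1 b])).1 hz a (Finset.mem_univ a)
    have h' : u a * (u a - 1) = 0 := by linear_combination -h
    rcases mul_eq_zero.1 h' with h0 | h0
    · exact Or.inl h0
    · exact Or.inr (by linarith)
  have hex : ∃ a, u a = 1 := by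
    by_contra hno
    push_neg at hno
    have : ∀ a ∈ Finset.univ, u a = 0 := fun a _ => (h01 a).resolve_right (hno a)
    rw [Finset.sum_eq_zero this] at hsum1
    norm_num at hsum1
  obtain ⟨a₀, ha₀⟩ := hex
  refine ⟨a₀, ?_, ?_⟩
  · intro h
    rw [hu] at ha₀
    simp only [h, map_zero] at ha₀
    norm_num at ha₀
  · intro y hy
    have huy : u y = 1 := by
      rcases h01 y with h0 | h0
      · exact absurd (Complex.normSq_eq_zero.1 h0) hy
      · exact h0
    by_contra hne
    have hge : (2:ℝ) ≤ ∑ a, u a := by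
      have hsub : (({y, a₀} : Finset F).sum u) ≤ Finset.univ.sum u :=
        Finset.sum_le_sum_of_subset_of_nonneg (Finset.subset_univ _)
          (fun a _ _ => hnn a)
      rw [Finset.sum_pair hne] at hsub
      have h2 : u y + u a₀ ≤ Finset.univ.sum u := hsub
      rw [huy, ha₀] at h2
      linarith
    rw [hsum1] at hge
    linarith

end Row4


end TPAux

/-- If `w` is a unitary on `ℂ^F` with `(w ⊗ w ⊗ w) E_{T₁} = E_{T₂,ω}`, where `T₁, T₂` are
triangle presentations of the same order `q ≥ 2` and `ω : T₂ → S¹`, then `w` is a monomial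
matrix, and consequently the triangle presentations `T₁` and `T₂` are isomorphic. -/
theorem monomial_of_unitary_intertwines {F : Type*} [Fintype F] [DecidableEq F]
    (q : ℕ) (hq : 2 ≤ q) (T₁ T₂ : Set (F × F × F))
    [DecidablePred (· ∈ T₁)] [DecidablePred (· ∈ T₂)]
    (hT₁ : IsTrianglePresentation q T₁) (hT₂ : IsTrianglePresentation q T₂)
    (ω : F × F × F → ℂ) (hω : ∀ x ∈ T₂, ‖ω x‖ = 1)
    (w : Matrix F F ℂ) (hw : wᴴ * w = 1 ∧ w * wᴴ = 1)
    (hwE : ∀ i j k : F,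
      (∑ a : F, ∑ b : F, ∑ c : F,
          w i a * w j b * w k c * (if (a, b, c) ∈ T₁ then 1 else 0)) =
        (if (i, j, k) ∈ T₂ then ω (i, j, k) else 0)) :
    (∀ i : F, ∃! j : F, w i j ≠ 0) ∧ (∀ j : F, ∃! i : F, w i j ≠ 0) ∧
    ∃ θ : Equiv.Perm F,
      (fun x : F × F × F => (θ x.1, θ x.2.1, θ x.2.2)) '' T₁ = T₂ := by
  have hrow : ∀ i : F, ∃! j : F, w i j ≠ 0 := fun i =>
    TPAux.row_existsUnique T₁ T₂ ω w i hq hT₁ hT₂ hω hw.1 hw.2 hwE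
  choose σ h1 h2 using hrow
  have hzero : ∀ i a, a ≠ σ i → w i a = 0 := by
    intro i a ha
    by_contra h
    exact ha (h2 i a h)
  have hinj : Function.Injective σ := by
    intro x y hxy
    by_contra hne
    have h0 : (w * wᴴ) x y = (1 : Matrix F F ℂ) x y := by rw [hw.2]
    rw [Matrix.mul_apply, Matrix.one_apply_ne hne] at h0
    have hcollapse : (∑ a, w x a * wᴴ a y) = w x (σ x) * wᴴ (σ x) y := by
      rw [Finset.sum_eq_single (σ x)]
      · intro b _ hb; rw [hzero x b hb, zero_mul]
      · intro h; exact absurd (Finset.mem_univ _) h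
    rw [hcollapse] at h0
    rcases mul_eq_zero.1 h0 with h | h
    · exact (h1 x) h
    · rw [Matrix.conjTranspose_apply, star_eq_zero] at h
      rw [hxy] at h
      exact (h1 y) h
  have hbij : Function.Bijective σ := Finite.injective_iff_bijective.1 hinj
  have hcol : ∀ j : F, ∃! i : F, w i j ≠ 0 := by
    intro j
    obtain ⟨i, hi⟩ := hbij.2 j
    refine ⟨i, ?_, ?_⟩
    · rw [← hi]; exact h1 i
    · intro y hy
      exact hinj ((h2 y j hy).symm.trans hi.symm)
  have hmem : ∀ i j k : F, ((i, j, k) ∈ T₂ ↔ (σ i, σ j, σ k) ∈ T₁) := by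
    intro i j k
    have hcoll : (∑ a : F, ∑ b : F, ∑ c : F,
          w i a * w j b * w k c * (if (a, b, c) ∈ T₁ then (1:ℂ) else 0))
        = w i (σ i) * w j (σ j) * w k (σ k) *
            (if (σ i, σ j, σ k) ∈ T₁ then 1 else 0) := by
      rw [Finset.sum_eq_single (σ i)]
      · rw [Finset.sum_eq_single (σ j)]
        · rw [Finset.sum_eq_single (σ k)]
          · intro c _ hc; rw [hzero k c hc]; ring
          · intro h; exact absurd (Finset.mem_univ _) h
        · intro b _ hb
          refine Finset.sum_eq_zero fun c _ => ?_
          rw [hzero j b hb]; ring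
        · intro h; exact absurd (Finset.mem_univ _) h
      · intro a _ ha
        refine Finset.sum_eq_zero fun b _ => Finset.sum_eq_zero fun c _ => ?_
        rw [hzero i a ha]; ring
      · intro h; exact absurd (Finset.mem_univ _) h
    have heq := hwE i j k
    rw [hcoll] at heq
    have hprod : w i (σ i) * w j (σ j) * w k (σ k) ≠ 0 :=
      mul_ne_zero (mul_ne_zero (h1 i) (h1 j)) (h1 k)
    constructor
    · intro hm2
      by_contra hm1
      rw [if_neg hm1, mul_zero, if_pos hm2] at heq
      have hωne : ω (i, j, k) ≠ 0 := by
        intro h0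
        have hn := hω _ hm2
        rw [h0] at hn
        simp at hn
      exact hωne heq.symm
    · intro hm1
      by_contra hm2
      rw [if_pos hm1, mul_one, if_neg hm2] at heq
      exact hprod heq
  refine ⟨fun i => ⟨σ i, h1 i, h2 i⟩, hcol, ?_⟩
  let e : F ≃ F := Equiv.ofBijective σ hbij
  have he : ∀ x, e x = σ x := fun x => rfl
  refine ⟨e.symm, ?_⟩
  ext ⟨x, y, z⟩
  constructor
  · rintro ⟨⟨a, b, c⟩, habc, heq2⟩
    simp only [Prod.mk.injEq] at heq2
    obtain ⟨hx, hy, hz⟩ := heq2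
    rw [hmem]
    have hxa : σ x = a := by rw [← hx, ← he, Equiv.apply_symm_apply]
    have hyb : σ y = b := by rw [← hy, ← he, Equiv.apply_symm_apply]
    have hzc : σ z = c := by rw [← hz, ← he, Equiv.apply_symm_apply]
    rw [hxa, hyb, hzc]
    exact habc
  · intro hxyz
    refine ⟨(σ x, σ y, σ z), (hmem x y z).1 hxyz, ?_⟩
    simp only [Prod.mk.injEq]
    exact ⟨by rw [← he, Equiv.symm_apply_apply], by rw [← he, Equiv.symm_apply_apply],
      by rw [← he, Equiv.symm_apply_apply]⟩
end

section
/- Fix μ ∈ (−1,1) with μ ≠ 0, let E ∈ (ℂ³)^{⊗3} be the q-deformed determinant vector, and let P = μ^{-2}(1+μ²)^{-1}(E* ⊗ 1 ⊗ 1)(1 ⊗ 1 ⊗ E) on ℂ³ ⊗ ℂ³. Let Y : ℂ³ → ℂ³ ⊗ ℂ³ be any isometry with YY* = P. Define s = μ^{-1}(1+μ²)^{-1/2}(1 ⊗ Y*)E and t = μ^{-1}(1+μ²)^{-1/2}(Y* ⊗ 1)E, both viewed as linear maps ℂ → ℂ³ ⊗ ℂ³. Then s and t solve the conjugate equations: (t*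 ⊗ 1)(1 ⊗ s) = id_{ℂ³} and (s* ⊗ 1)(1 ⊗ t) = id_{ℂ³}. Moreover s*s = t*t = (μ² + 1 + μ^{-2})·id_ℂ. -/
open Matrix

/-- The q-deformed determinant vector
`E = e₁₂₃ − μe₁₃₂ − μe₂₁₃ + μ²e₂₃₁ + μ²e₃₁₂ − μ³e₃₂₁ ∈ (ℂ³)^{⊗3}`, in the identification
of `(ℂ³)^{⊗3}` with functions `(Fin 3)³ → ℂ` (with the standard basis indexed from `0`). -/
noncomputable def Ev (μ : ℝ) : Fin 3 × Fin 3 × Fin 3 → ℂ := fun x =>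
  if x = (0, 1, 2) then 1
  else if x = (0, 2, 1) then -(μ : ℂ)
  else if x = (1, 0, 2) then -(μ : ℂ)
  else if x = (1, 2, 0) then (μ : ℂ) ^ 2
  else if x = (2, 0, 1) then (μ : ℂ) ^ 2
  else if x = (2, 1, 0) then -(μ : ℂ) ^ 3
  else 0

/-- The matrix of `1 ⊗ 1 ⊗ E : ℂ³ ⊗ ℂ³ → (ℂ³)^{⊗5}`. -/
noncomputable def oneOneE3 (μ : ℝ) :
    Matrix (Fin 3 × Fin 3 × Fin 3 × Fin 3 × Fin 3) (Fin 3 × Fin 3) ℂ :=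
  Matrix.of fun x p =>
    if x.1 = p.1 ∧ x.2.1 = p.2 then Ev μ (x.2.2.1, x.2.2.2.1, x.2.2.2.2) else 0

/-- The matrix of `E* ⊗ 1 ⊗ 1 : (ℂ³)^{⊗5} → ℂ³ ⊗ ℂ³`. -/
noncomputable def estarOneOne3 (μ : ℝ) :
    Matrix (Fin 3 × Fin 3) (Fin 3 × Fin 3 × Fin 3 × Fin 3 × Fin 3) ℂ :=
  Matrix.of fun p x =>
    if p.1 = x.2.2.2.1 ∧ p.2 = x.2.2.2.2 then star (Ev μ (x.1, x.2.1, x.2.2.1)) else 0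

/-- The matrix of `E ⊗ 1 ⊗ 1 : ℂ³ ⊗ ℂ³ → (ℂ³)^{⊗5}`. -/
noncomputable def eOneOne3 (μ : ℝ) :
    Matrix (Fin 3 × Fin 3 × Fin 3 × Fin 3 × Fin 3) (Fin 3 × Fin 3) ℂ :=
  Matrix.of fun x p =>
    if x.2.2.2.1 = p.1 ∧ x.2.2.2.2 = p.2 then Ev μ (x.1, x.2.1, x.2.2.1) else 0

/-- The matrix of `1 ⊗ 1 ⊗ E* : (ℂ³)^{⊗5} → ℂ³ ⊗ ℂ³`. -/
noncomputable def oneOneEstar3 (μ : ℝ) :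
    Matrix (Fin 3 × Fin 3) (Fin 3 × Fin 3 × Fin 3 × Fin 3 × Fin 3) ℂ :=
  Matrix.of fun p x =>
    if p.1 = x.1 ∧ p.2 = x.2.1 then star (Ev μ (x.2.2.1, x.2.2.2.1, x.2.2.2.2)) else 0

/-- The operator `P = μ⁻²(1+μ²)⁻¹ (E* ⊗ 1 ⊗ 1)(1 ⊗ 1 ⊗ E)` on `ℂ³ ⊗ ℂ³`. -/
noncomputable def Pmat3 (μ : ℝ) : Matrix (Fin 3 × Fin 3) (Fin 3 × Fin 3) ℂ :=
  (((μ : ℂ) ^ 2)⁻¹ * (1 + (μ : ℂ) ^ 2)⁻¹) • (estarOneOne3 μ * oneOneE3 μ)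

/-- The matrix of `1 ⊗ Y* : (ℂ³)^{⊗3} → ℂ³ ⊗ ℂ³` (with `Y*` acting on the last two legs). -/
noncomputable def oneYstar3 (Y : Matrix (Fin 3 × Fin 3) (Fin 3) ℂ) :
    Matrix (Fin 3 × Fin 3) (Fin 3 × Fin 3 × Fin 3) ℂ :=
  Matrix.of fun p x => if p.1 = x.1 then Yᴴ p.2 x.2 else 0

/-- The matrix of `Y* ⊗ 1 : (ℂ³)^{⊗3} → ℂ³ ⊗ ℂ³` (with `Y*` acting on the first two legs). -/
noncomputable def ystarOne3 (Y : Matrix (Fin 3 × Fin 3) (Fin 3) ℂ) :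
    Matrix (Fin 3 × Fin 3) (Fin 3 × Fin 3 × Fin 3) ℂ :=
  Matrix.of fun p x => if p.2 = x.2.2 then Yᴴ p.1 (x.1, x.2.1) else 0

/-- The vector `s = μ⁻¹(1+μ²)^{-1/2}(1 ⊗ Y*)E ∈ ℂ³ ⊗ ℂ³`. -/
noncomputable def svec3 (μ : ℝ) (Y : Matrix (Fin 3 × Fin 3) (Fin 3) ℂ) : Fin 3 × Fin 3 → ℂ :=
  (((μ⁻¹ : ℝ) : ℂ) * (((Real.sqrt (1 + μ ^ 2))⁻¹ : ℝ) : ℂ)) •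
    (oneYstar3 Y).mulVec (Ev μ)

/-- The vector `t = μ⁻¹(1+μ²)^{-1/2}(Y* ⊗ 1)E ∈ ℂ³ ⊗ ℂ³`. -/
noncomputable def tvec3 (μ : ℝ) (Y : Matrix (Fin 3 × Fin 3) (Fin 3) ℂ) : Fin 3 × Fin 3 → ℂ :=
  (((μ⁻¹ : ℝ) : ℂ) * (((Real.sqrt (1 + μ ^ 2))⁻¹ : ℝ) : ℂ)) •
    (ystarOne3 Y).mulVec (Ev μ)

/-- The matrix of `1 ⊗ v : ℂ³ → (ℂ³)^{⊗3}` for a vector `v ∈ ℂ³ ⊗ ℂ³`. -/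
noncomputable def oneVec3 (v : Fin 3 × Fin 3 → ℂ) : Matrix (Fin 3 × Fin 3 × Fin 3) (Fin 3) ℂ :=
  Matrix.of fun x c => if x.1 = c then v x.2 else 0

/-- The matrix of `v* ⊗ 1 : (ℂ³)^{⊗3} → ℂ³` for a vector `v ∈ ℂ³ ⊗ ℂ³`. -/
noncomputable def vecStarOne3 (v : Fin 3 × Fin 3 → ℂ) : Matrix (Fin 3) (Fin 3 × Fin 3 × Fin 3) ℂ :=
  Matrix.of fun c x => if c = x.2.2 then star (v (x.1, x.2.1)) else 0

/-! ### Auxiliary matrices: `F = E` viewed as a map `ℂ³ → ℂ³ ⊗ ℂ³` contracting the last leg,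
`G` contracting the first leg. -/

noncomputable def Fm (μ : ℝ) : Matrix (Fin 3 × Fin 3) (Fin 3) ℂ :=
  Matrix.of fun x j => Ev μ (x.1, x.2, j)

noncomputable def Gm (μ : ℝ) : Matrix (Fin 3) (Fin 3 × Fin 3) ℂ :=
  Matrix.of fun j y => Ev μ (j, y.1, y.2)

lemma ev_star (μ : ℝ) (x : Fin 3 × Fin 3 × Fin 3) : star (Ev μ x) = Ev μ x := by
  unfold Ev; split_ifs <;> simp [Complex.star_def, map_pow, Complex.conj_ofReal]

lemma key_prod (μ : ℝ) : estarOneOne3 μ * oneOneE3 μ = (Fm μ * Gm μ)ᵀ := by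
  ext p q
  simp only [Matrix.mul_apply, estarOneOne3, oneOneE3, Matrix.of_apply, Fintype.sum_prod_type,
    ite_and, ite_mul, mul_ite, zero_mul, mul_zero, ev_star, transpose_apply, Fm, Gm]
  simp [Finset.sum_ite_eq, Finset.sum_ite_eq']

lemma Pmat3_eq (μ : ℝ) :
    Pmat3 μ = (((μ : ℂ) ^ 2)⁻¹ * (1 + (μ : ℂ) ^ 2)⁻¹) • (Fm μ * Gm μ)ᵀ := by
  rw [Pmat3, key_prod]

lemma wT_eq (μ : ℝ) (Y : Matrix (Fin 3 × Fin 3) (Fin 3) ℂ) :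
    (ystarOne3 Y).mulVec (Ev μ) = fun p => (Yᴴ * Fm μ) p.1 p.2 := by
  funext p
  simp only [Matrix.mulVec, dotProduct, ystarOne3, Matrix.of_apply, Matrix.mul_apply,
    Fintype.sum_prod_type, ite_mul, zero_mul, Fm, conjTranspose_apply]
  simp [Finset.sum_ite_eq, Finset.sum_ite_eq']

lemma wS_eq (μ : ℝ) (Y : Matrix (Fin 3 × Fin 3) (Fin 3) ℂ) :
    (oneYstar3 Y).mulVec (Ev μ) = fun p => (Gm μ * Y.map (starRingEnd ℂ)) p.1 p.2 := by
  funext p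
  simp only [Matrix.mulVec, dotProduct, oneYstar3, Matrix.of_apply, Matrix.mul_apply,
    Fintype.sum_prod_type, ite_mul, zero_mul, Gm, conjTranspose_apply, Matrix.map_apply]
  simp [Finset.sum_ite_eq, Finset.sum_ite_eq', mul_comm]

lemma V1 (v w : Fin 3 × Fin 3 → ℂ) :
    vecStarOne3 v * oneVec3 w
      = Matrix.of fun a b => ∑ j : Fin 3, star (v (b, j)) * w (j, a) := by
  ext a b
  simp only [Matrix.mul_apply, vecStarOne3, oneVec3, Matrix.of_apply, Fintype.sum_prod_type,
    ite_mul, mul_ite, zero_mul, mul_zero]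
  simp [Finset.sum_ite_eq, Finset.sum_ite_eq', mul_comm]

lemma V4 (M N : Matrix (Fin 3) (Fin 3) ℂ) :
    (Matrix.of fun a b => ∑ j : Fin 3, star (M b j) * N j a) = Nᵀ * Mᴴ := by
  ext a b
  simp [Matrix.mul_apply, conjTranspose_apply, transpose_apply, mul_comm]

lemma oneVec3_smul (c : ℂ) (v : Fin 3 × Fin 3 → ℂ) : oneVec3 (c • v) = c • oneVec3 v := by
  ext x y; simp [oneVec3, Matrix.smul_apply, mul_ite, mul_zero]

lemma vecStarOne3_smul (c : ℂ) (v : Fin 3 × Fin 3 → ℂ) :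
    vecStarOne3 (c • v) = (star c) • vecStarOne3 v := by
  ext x y; simp [vecStarOne3, Matrix.smul_apply, mul_ite, mul_zero, star_mul']

lemma Yct (Y : Matrix (Fin 3 × Fin 3) (Fin 3) ℂ) : (Y.map (starRingEnd ℂ))ᵀ = Yᴴ := by
  ext a b
  simp only [transpose_apply, Matrix.map_apply, conjTranspose_apply, starRingEnd_apply]

lemma Yht (Y : Matrix (Fin 3 × Fin 3) (Fin 3) ℂ) : (Yᴴ)ᵀ = Y.map (starRingEnd ℂ) := by
  ext a b
  simp only [transpose_apply, Matrix.map_apply, conjTranspose_apply, starRingEnd_apply]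

lemma Ych (Y : Matrix (Fin 3 × Fin 3) (Fin 3) ℂ) : (Y.map (starRingEnd ℂ))ᴴ = Yᵀ := by
  ext a b
  simp only [transpose_apply, Matrix.map_apply, conjTranspose_apply, starRingEnd_apply,
    star_star]

lemma Fherm (μ : ℝ) : (Fm μ)ᴴ = (Fm μ)ᵀ := by
  ext a b; simp [conjTranspose_apply, Fm, ev_star]

lemma Gherm (μ : ℝ) : (Gm μ)ᴴ = (Gm μ)ᵀ := by
  ext a b; simp [conjTranspose_apply, Gm, ev_star]

lemma YcYt (Y : Matrix (Fin 3 × Fin 3) (Fin 3) ℂ) :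
    Y.map (starRingEnd ℂ) * Yᵀ = (Y * Yᴴ).map (starRingEnd ℂ) := by
  ext a b
  simp [Matrix.mul_apply, Matrix.map_apply, conjTranspose_apply, map_sum, mul_comm]

lemma fg_star (μ : ℝ) (a b : Fin 3 × Fin 3) :
    (starRingEnd ℂ) ((Fm μ * Gm μ)ᵀ a b) = (Fm μ * Gm μ)ᵀ a b := by
  simp only [transpose_apply, Matrix.mul_apply, map_sum, _root_.map_mul, Fm, Gm,
    Matrix.of_apply, starRingEnd_apply, ev_star]

lemma dot_eq (M : Matrix (Fin 3) (Fin 3) ℂ) :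
    star (fun p : Fin 3 × Fin 3 => M p.1 p.2) ⬝ᵥ (fun p : Fin 3 × Fin 3 => M p.1 p.2)
      = (Mᴴ * M).trace := by
  simp only [Matrix.trace, Matrix.diag_apply, Matrix.mul_apply, conjTranspose_apply,
    dotProduct, Pi.star_apply, Fintype.sum_prod_type]
  exact Finset.sum_comm

set_option maxHeartbeats 1600000 in
/-- For any isometry `Y` with `YY* = P`, the maps `s, t : ℂ → ℂ³ ⊗ ℂ³` solve the conjugate
equations `(t* ⊗ 1)(1 ⊗ s) = 1` and `(s* ⊗ 1)(1 ⊗ t) = 1`; moreover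
`s*s = t*t = μ² + 1 + μ⁻²`. -/
theorem conjugate_equations_su3 (μ : ℝ) (hμ1 : -1 < μ) (hμ2 : μ < 1) (hμ0 : μ ≠ 0)
    (Y : Matrix (Fin 3 × Fin 3) (Fin 3) ℂ) (hY1 : Yᴴ * Y = 1) (hY2 : Y * Yᴴ = Pmat3 μ) :
    vecStarOne3 (tvec3 μ Y) * oneVec3 (svec3 μ Y) = 1 ∧
    vecStarOne3 (svec3 μ Y) * oneVec3 (tvec3 μ Y) = 1 ∧
    star (svec3 μ Y) ⬝ᵥ svec3 μ Y = ((μ ^ 2 + 1 + (μ ^ 2)⁻¹ : ℝ) : ℂ) ∧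
    star (tvec3 μ Y) ⬝ᵥ tvec3 μ Y = ((μ ^ 2 + 1 + (μ ^ 2)⁻¹ : ℝ) : ℂ) := by
  have h1pos : (0:ℝ) < 1 + μ ^ 2 := by positivity
  set κ : ℂ := ((μ : ℂ) ^ 2)⁻¹ * (1 + (μ : ℂ) ^ 2)⁻¹ with hκdef
  have hμC : (μ : ℂ) ≠ 0 := Complex.ofReal_ne_zero.mpr hμ0
  have h1C : (1 : ℂ) + (μ : ℂ) ^ 2 ≠ 0 := by
    have h : (1 : ℂ) + (μ : ℂ) ^ 2 = ((1 + μ ^ 2 : ℝ) : ℂ) := by push_cast; ring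
    rw [h]; exact Complex.ofReal_ne_zero.mpr h1pos.ne'
  have hκ0 : κ ≠ 0 := mul_ne_zero (inv_ne_zero (pow_ne_zero _ hμC)) (inv_ne_zero h1C)
  set c : ℂ := ((μ⁻¹ : ℝ) : ℂ) * (((Real.sqrt (1 + μ ^ 2))⁻¹ : ℝ) : ℂ) with hcdef
  have hcs : star c = c := by
    simp [hcdef, Complex.star_def, _root_.map_mul, Complex.conj_ofReal]
  have hcc : c * c = κ := by
    have h2 : Real.sqrt (1 + μ ^ 2) * Real.sqrt (1 + μ ^ 2) = 1 + μ ^ 2 :=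
      Real.mul_self_sqrt h1pos.le
    have hr : μ⁻¹ * (Real.sqrt (1 + μ ^ 2))⁻¹ * (μ⁻¹ * (Real.sqrt (1 + μ ^ 2))⁻¹)
        = (μ ^ 2)⁻¹ * ((1 : ℝ) + μ ^ 2)⁻¹ := by
      have h3 : Real.sqrt (1 + μ ^ 2) ≠ 0 := by positivity
      field_simp
      nlinarith [h2]
    calc c * c
        = ((μ⁻¹ * (Real.sqrt (1 + μ ^ 2))⁻¹ * (μ⁻¹ * (Real.sqrt (1 + μ ^ 2))⁻¹) : ℝ) : ℂ) := by
          rw [hcdef]; push_cast; ring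
      _ = κ := by rw [hr, hκdef]; push_cast; ring
  -- the key substitution for `Y * Yᴴ`
  have hP : Y * Yᴴ = κ • (Fm μ * Gm μ)ᵀ := by rw [hY2, Pmat3_eq, hκdef]
  have hFG : (Fm μ * Gm μ)ᵀ = κ⁻¹ • (Y * Yᴴ) := by
    rw [hP, smul_smul, inv_mul_cancel₀ hκ0, one_smul]
  -- map-star of P
  have hκstar : (starRingEnd ℂ) κ = κ := by
    simp [hκdef, _root_.map_mul, map_inv₀, _root_.map_add, map_pow, _root_.map_one,
      Complex.conj_ofReal]
  have hPs : (Y * Yᴴ).map (starRingEnd ℂ) = κ • (Fm μ * Gm μ)ᵀ := by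
    rw [hP]
    ext a b
    simp only [Matrix.map_apply, Matrix.smul_apply, smul_eq_mul, _root_.map_mul, fg_star, hκstar]
  have ht : tvec3 μ Y = c • (ystarOne3 Y).mulVec (Ev μ) := rfl
  have hs : svec3 μ Y = c • (oneYstar3 Y).mulVec (Ev μ) := rfl
  refine ⟨?_, ?_, ?_, ?_⟩
  · -- first conjugate equation
    rw [ht, hs, vecStarOne3_smul, oneVec3_smul, Matrix.smul_mul, Matrix.mul_smul, smul_smul,
      hcs, hcc, wT_eq, wS_eq, V1]
    dsimp only
    rw [V4, transpose_mul, conjTranspose_mul, conjTranspose_conjTranspose, Yct, Fherm]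
    have h5 : Yᴴ * (Gm μ)ᵀ * ((Fm μ)ᵀ * Y) = Yᴴ * ((Fm μ * Gm μ)ᵀ * Y) := by
      rw [transpose_mul]; simp only [Matrix.mul_assoc]
    rw [h5, hFG, Matrix.smul_mul, Matrix.mul_smul, smul_smul, mul_inv_cancel₀ hκ0, one_smul]
    simp only [Matrix.mul_assoc]
    rw [hY1, Matrix.mul_one, hY1]
  · -- second conjugate equation
    rw [hs, ht, vecStarOne3_smul, oneVec3_smul, Matrix.smul_mul, Matrix.mul_smul, smul_smul,
      hcs, hcc, wT_eq, wS_eq, V1]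
    dsimp only
    rw [V4, transpose_mul, conjTranspose_mul, Yht, Ych, Gherm]
    have h5 : (Fm μ)ᵀ * Y.map (starRingEnd ℂ) * (Yᵀ * (Gm μ)ᵀ)
        = (Fm μ)ᵀ * ((Y.map (starRingEnd ℂ) * Yᵀ) * (Gm μ)ᵀ) := by
      simp only [Matrix.mul_assoc]
    rw [h5, YcYt, hPs]
    ext a b
    fin_cases a <;> fin_cases b <;>
      simp [Matrix.smul_apply, smul_eq_mul, Matrix.mul_apply, Matrix.one_apply,
        transpose_apply, Fm, Gm, Ev, Fintype.sum_prod_type, Fin.sum_univ_three] <;>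
      rw [hκdef] <;> field_simp [hμC, h1C] <;> ring
  · -- s* s
    rw [hs, star_smul, smul_dotProduct, dotProduct_smul, hcs, smul_eq_mul, smul_eq_mul,
      ← mul_assoc, hcc, wS_eq, dot_eq, conjTranspose_mul, Ych, Gherm]
    have h5 : (Yᵀ * (Gm μ)ᵀ) * (Gm μ * Y.map (starRingEnd ℂ))
        = Yᵀ * ((Gm μ)ᵀ * (Gm μ * Y.map (starRingEnd ℂ))) := by
      simp only [Matrix.mul_assoc]
    rw [h5, Matrix.trace_mul_comm]
    have h6 : ((Gm μ)ᵀ * (Gm μ * Y.map (starRingEnd ℂ))) * Yᵀ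
        = (Gm μ)ᵀ * (Gm μ * (Y.map (starRingEnd ℂ) * Yᵀ)) := by
      simp only [Matrix.mul_assoc]
    rw [h6, YcYt, hPs, Matrix.mul_smul, Matrix.mul_smul, Matrix.trace_smul]
    have hT : ((Gm μ)ᵀ * (Gm μ * (Fm μ * Gm μ)ᵀ)).trace
        = (μ:ℂ)^2 * (1 + (μ:ℂ)^2)^2 * (1 + (μ:ℂ)^2 + (μ:ℂ)^4) := by
      simp [Matrix.trace, Matrix.diag, Matrix.mul_apply, transpose_apply, Fm, Gm, Ev,
        Fintype.sum_prod_type, Fin.sum_univ_three]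
      ring
    rw [hT, smul_eq_mul, hκdef]
    push_cast
    field_simp
    ring
  · -- t* t
    rw [ht, star_smul, smul_dotProduct, dotProduct_smul, hcs, smul_eq_mul, smul_eq_mul,
      ← mul_assoc, hcc, wT_eq, dot_eq, conjTranspose_mul, conjTranspose_conjTranspose, Fherm]
    have h5 : ((Fm μ)ᵀ * Y) * (Yᴴ * Fm μ) = (Fm μ)ᵀ * ((Y * Yᴴ) * Fm μ) := by
      simp only [Matrix.mul_assoc]
    rw [h5, hP, Matrix.smul_mul, Matrix.mul_smul, Matrix.trace_smul]
    have hT : ((Fm μ)ᵀ * ((Fm μ * Gm μ)ᵀ * Fm μ)).trace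
        = (μ:ℂ)^2 * (1 + (μ:ℂ)^2)^2 * (1 + (μ:ℂ)^2 + (μ:ℂ)^4) := by
      simp [Matrix.trace, Matrix.diag, Matrix.mul_apply, transpose_apply, Fm, Gm, Ev,
        Fintype.sum_prod_type, Fin.sum_univ_three]
      ring
    rw [hT, smul_eq_mul, hκdef]
    push_cast
    field_simp
    ring
end
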